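/- arXiv:2106.06290 — 7 statements merged into one kernel-verified Lean document; each statement's English description precedes it below -/
import Mathlib

section
/- Sufficient condition for minimality in Sobolev L¹ norm: let P_n be a monic polynomial of degree n such that Σ_{k=0}^m ∫ q^{(k)}(x) · sgn(P_n^{(k)}(x)) dμ_k(x) = 0 for every polynomial q of degree at most n−1. Then for every monic polynomial Q of degree n, Σ_{k=0}^m ∫ |P_n^{(k)}| dμ_k ≤ Σ_{k=0}^m ∫ |Q^{(k)}| dμ_k. -/
open Polynomial MeasureTheory

lemma real_measurable_sign : Measurable Real.sign := by
  unfold Real.sign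
  exact Measurable.ite (measurableSet_lt measurable_id measurable_const) measurable_const
    (Measurable.ite (measurableSet_lt measurable_const measurable_id) measurable_const
      measurable_const)

lemma real_self_mul_sign (x : ℝ) : x * Real.sign x = |x| := by
  rcases lt_trichotomy x 0 with h | h | h
  · rw [Real.sign_of_neg h, abs_of_neg h]; ring
  · simp [h, Real.sign_zero]
  · rw [Real.sign_of_pos h, abs_of_pos h]; ring

lemma real_abs_sign_le (x : ℝ) : |Real.sign x| ≤ 1 := by
  rcases Real.sign_apply_eq x with h | h | h <;> rw [h] <;> norm_num

/-- Sufficient condition for minimality in the Sobolev `L¹` norm: if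
`∑ₖ ∫ q⁽ᵏ⁾ sgn(Pₙ⁽ᵏ⁾) dμₖ = 0` for all `q` of degree at most `n-1`, then `Pₙ`
minimizes the Sobolev `1`-norm among monic polynomials of degree `n`. -/
theorem sobolev_L1_sufficient_condition
    (m n : ℕ) (μ : Fin (m + 1) → Measure ℝ)
    (hfin : ∀ k, IsFiniteMeasure (μ k))
    (hint : ∀ (k : Fin (m + 1)) (q : Polynomial ℝ),
      Integrable (fun x => q.eval x) (μ k))
    (P : Polynomial ℝ) (hPm : P.Monic) (hPd : P.natDegree = n)
    (horth : ∀ q : Polynomial ℝ, q.degree < n →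
      ∑ k : Fin (m + 1),
        ∫ x : ℝ, (derivative^[(k : ℕ)] q).eval x *
          Real.sign ((derivative^[(k : ℕ)] P).eval x) ∂ μ k = 0) :
    ∀ Q : Polynomial ℝ, Q.Monic → Q.natDegree = n →
      ∑ k : Fin (m + 1), ∫ x : ℝ, |(derivative^[(k : ℕ)] P).eval x| ∂ μ k ≤
      ∑ k : Fin (m + 1), ∫ x : ℝ, |(derivative^[(k : ℕ)] Q).eval x| ∂ μ k := by
  intro Q hQm hQd
  -- integrability of q⁽ᵏ⁾ * sign(P⁽ᵏ⁾)
  have hintsgn : ∀ (k : Fin (m + 1)) (q : Polynomial ℝ),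
      Integrable (fun x => q.eval x * Real.sign ((derivative^[(k : ℕ)] P).eval x)) (μ k) := by
    intro k q
    refine (hint k q).mono ?_ ?_
    · exact ((q.continuous_aeval.measurable).mul
        (real_measurable_sign.comp (derivative^[(k : ℕ)] P).continuous_aeval.measurable)).aestronglyMeasurable
    · refine Filter.Eventually.of_forall fun x => ?_
      simp only [Real.norm_eq_abs, abs_mul]
      calc |q.eval x| * |Real.sign ((derivative^[(k : ℕ)] P).eval x)|
          ≤ |q.eval x| * 1 := by
            exact mul_le_mul_of_nonneg_left (real_abs_sign_le _) (abs_nonneg _)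
        _ = |q.eval x| := mul_one _
  -- step 1: ‖P‖ = Σ ∫ P⁽ᵏ⁾ sgn(P⁽ᵏ⁾)
  have h1 : ∑ k : Fin (m + 1), ∫ x : ℝ, |(derivative^[(k : ℕ)] P).eval x| ∂ μ k =
      ∑ k : Fin (m + 1), ∫ x : ℝ, (derivative^[(k : ℕ)] P).eval x *
        Real.sign ((derivative^[(k : ℕ)] P).eval x) ∂ μ k := by
    refine Finset.sum_congr rfl fun k _ => ?_
    refine integral_congr_ae (Filter.Eventually.of_forall fun x => ?_)
    exact (real_self_mul_sign _).symm
  -- step 2: P - Q has degree < n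
  have hdeg : (P - Q).degree < (n : WithBot ℕ) := by
    by_cases hPQ : P = Q
    · simp [hPQ]
    · have : (P - Q).degree < P.degree := by
        refine degree_sub_lt ?_ hPm.ne_zero ?_
        · rw [degree_eq_natDegree hPm.ne_zero, degree_eq_natDegree hQm.ne_zero, hPd, hQd]
        · rw [hPm.leadingCoeff, hQm.leadingCoeff]
      rwa [degree_eq_natDegree hPm.ne_zero, hPd] at this
  have horthPQ := horth (P - Q) hdeg
  -- step 3: rewrite Σ∫P⁽ᵏ⁾sgn = Σ∫Q⁽ᵏ⁾sgn
  have hPk : ∀ k : ℕ, derivative^[k] (P - Q) = derivative^[k] P - derivative^[k] Q := by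
    intro k
    induction k with
    | zero => simp
    | succ k ih => simp [Function.iterate_succ_apply', ih]
  have h2 : ∑ k : Fin (m + 1), ∫ x : ℝ, (derivative^[(k : ℕ)] P).eval x *
        Real.sign ((derivative^[(k : ℕ)] P).eval x) ∂ μ k =
      ∑ k : Fin (m + 1), ∫ x : ℝ, (derivative^[(k : ℕ)] Q).eval x *
        Real.sign ((derivative^[(k : ℕ)] P).eval x) ∂ μ k := by
    have := horthPQ
    rw [← sub_eq_zero]
    rw [← Finset.sum_sub_distrib] at *
    convert this using 2 with k
    rw [← integral_sub (hintsgn k _) (hintsgn k _)]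
    refine integral_congr_ae (Filter.Eventually.of_forall fun x => ?_)
    simp [hPk k, sub_mul]
  -- step 4: ∫ Q⁽ᵏ⁾ sgn ≤ ∫ |Q⁽ᵏ⁾|
  rw [h1, h2]
  refine Finset.sum_le_sum fun k _ => ?_
  refine integral_mono (hintsgn k _) ((hint k _).abs) fun x => ?_
  calc (derivative^[(k : ℕ)] Q).eval x * Real.sign ((derivative^[(k : ℕ)] P).eval x)
      ≤ |(derivative^[(k : ℕ)] Q).eval x * Real.sign ((derivative^[(k : ℕ)] P).eval x)| :=
        le_abs_self _
    _ = |(derivative^[(k : ℕ)] Q).eval x| * |Real.sign ((derivative^[(k : ℕ)] P).eval x)| :=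
        abs_mul _ _
    _ ≤ |(derivative^[(k : ℕ)] Q).eval x| * 1 :=
        mul_le_mul_of_nonneg_left (real_abs_sign_le _) (abs_nonneg _)
    _ = _ := mul_one _
end

section
/- For every a ∈ [0,1], the monic quadratic polynomial P_a(x) = (x+1)(x−a) satisfies both orthogonality conditions: ∫_{−2}^0 sgn((x+1)(x−a)) dx = 0 and ∫_{−2}^0 x·sgn((x+1)(x−a)) dx + ∫_0^1 sgn(2x+1−a) dx = 0. Consequently, all polynomials P_a for a ∈ [0,1] are minimal of degree 2 with respect to the Sobolev norm ‖f‖ = ∫_{−2}^0 |f| dx + ∫_0^1 |f'| dx, so the minimal polynomial for this norm is not unique. -/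
open Polynomial MeasureTheory intervalIntegral

/-- The Sobolev 1-norm `‖f‖ = ∫_{-2}^0 |f| dx + ∫_0^1 |f'| dx`. -/
noncomputable def sobNorm5 (f : Polynomial ℝ) : ℝ :=
  (∫ x in (-2 : ℝ)..0, |f.eval x|) + ∫ x in (0 : ℝ)..1, |(derivative f).eval x|

-- basic: ae ne point
lemma ae_ne_pt (c : ℝ) : ∀ᵐ x : ℝ ∂volume, x ≠ c := by
  refine MeasureTheory.ae_iff.mpr ?_
  simp

-- quadratic integral
lemma quad_int (p q a b : ℝ) :
    (∫ x in a..b, (x^2 + p*x + q)) =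
      (b^3/3 + p*b^2/2 + q*b) - (a^3/3 + p*a^2/2 + q*a) := by
  have h : ∀ x ∈ Set.uIcc a b,
      HasDerivAt (fun x : ℝ => x^3/3 + p*x^2/2 + q*x) (x^2 + p*x + q) x := by
    intro x _
    have h1 := (((hasDerivAt_pow 3 x).div_const 3).add
      (((hasDerivAt_pow 2 x).const_mul p).div_const 2)).add ((hasDerivAt_id x).const_mul q)
    exact h1.congr_deriv (by simp; ring)
  rw [intervalIntegral.integral_eq_sub_of_hasDerivAt h
    (by apply Continuous.intervalIntegrable; continuity)]

lemma intInt_of_ae (f g : ℝ → ℝ) (a b c : ℝ) (hg : IntervalIntegrable g volume a b)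
    (h : ∀ x ∈ Set.uIoc a b, x ≠ c → f x = g x) : IntervalIntegrable f volume a b := by
  rw [intervalIntegrable_iff] at hg ⊢
  refine hg.congr_fun_ae ?_
  filter_upwards [ae_restrict_mem measurableSet_uIoc, ae_restrict_of_ae (ae_ne_pt c)]
    with x hx hxc
  exact (h x hx hxc).symm

lemma int_congr_ae (f g : ℝ → ℝ) (a b c : ℝ)
    (h : ∀ x ∈ Set.uIoc a b, x ≠ c → f x = g x) :
    (∫ x in a..b, f x) = ∫ x in a..b, g x := by
  refine intervalIntegral.integral_congr_ae ?_
  filter_upwards [ae_ne_pt c] with x hxc hx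
  exact h x hx hxc

lemma sgn_pos_piece {a : ℝ} (ha0 : 0 ≤ a) : ∀ x ∈ Set.uIoc (-2:ℝ) (-1), x ≠ -1 →
    Real.sign ((x + 1) * (x - a)) = 1 := by
  intro x hx hxc
  rw [Set.uIoc_of_le (by norm_num)] at hx
  obtain ⟨h1, h2⟩ := hx
  have hx1 : x + 1 < 0 := by rcases lt_or_eq_of_le h2 with h | h; linarith; exact absurd h hxc
  exact Real.sign_of_pos (mul_pos_of_neg_of_neg hx1 (by linarith))

lemma sgn_neg_piece {a : ℝ} (ha0 : 0 ≤ a) : ∀ x ∈ Set.uIoc (-1:ℝ) 0, x ≠ 0 →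
    Real.sign ((x + 1) * (x - a)) = -1 := by
  intro x hx hxc
  rw [Set.uIoc_of_le (by norm_num)] at hx
  obtain ⟨h1, h2⟩ := hx
  have hx0 : x < 0 := lt_of_le_of_ne h2 hxc
  exact Real.sign_of_neg (mul_neg_of_pos_of_neg (by linarith) (by linarith))

lemma sgn_deriv_piece {a : ℝ} (ha1 : a ≤ 1) : ∀ x ∈ Set.uIoc (0:ℝ) 1, x ≠ 0 →
    Real.sign (2 * x + 1 - a) = 1 := by
  intro x hx hxc
  rw [Set.uIoc_of_le (by norm_num)] at hx
  exact Real.sign_of_pos (by nlinarith [hx.1])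

lemma sign_int1 {a : ℝ} (ha0 : 0 ≤ a) :
    (∫ x in (-2:ℝ)..0, Real.sign ((x + 1) * (x - a))) = 0 := by
  have i1 : IntervalIntegrable (fun x => Real.sign ((x + 1) * (x - a))) volume (-2) (-1) :=
    intInt_of_ae _ (fun _ => 1) _ _ (-1) intervalIntegrable_const (sgn_pos_piece ha0)
  have i2 : IntervalIntegrable (fun x => Real.sign ((x + 1) * (x - a))) volume (-1) 0 :=
    intInt_of_ae _ (fun _ => -1) _ _ 0 intervalIntegrable_const (sgn_neg_piece ha0)
  rw [← intervalIntegral.integral_add_adjacent_intervals i1 i2,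
    int_congr_ae _ (fun _ => (1:ℝ)) (-2) (-1) (-1) (sgn_pos_piece ha0),
    int_congr_ae _ (fun _ => (-1:ℝ)) (-1) 0 0 (sgn_neg_piece ha0)]
  simp
  norm_num

lemma sign_int2 {a : ℝ} (ha0 : 0 ≤ a) (ha1 : a ≤ 1) :
    ((∫ x in (-2:ℝ)..0, x * Real.sign ((x + 1) * (x - a))) +
      ∫ x in (0:ℝ)..1, Real.sign (2 * x + 1 - a)) = 0 := by
  have i1 : IntervalIntegrable (fun x => x * Real.sign ((x + 1) * (x - a))) volume (-2) (-1) :=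
    intInt_of_ae _ (fun x => x) _ _ (-1)
      (by apply Continuous.intervalIntegrable; continuity)
      (fun x hx hc => by rw [sgn_pos_piece ha0 x hx hc]; ring)
  have i2 : IntervalIntegrable (fun x => x * Real.sign ((x + 1) * (x - a))) volume (-1) 0 :=
    intInt_of_ae _ (fun x => -x) _ _ 0
      (by apply Continuous.intervalIntegrable; continuity)
      (fun x hx hc => by rw [sgn_neg_piece ha0 x hx hc]; ring)
  rw [← intervalIntegral.integral_add_adjacent_intervals i1 i2,
    int_congr_ae _ (fun x : ℝ => x) (-2) (-1) (-1)
      (fun x hx hc => by rw [sgn_pos_piece ha0 x hx hc]; ring),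
    int_congr_ae _ (fun x : ℝ => -x) (-1) 0 0
      (fun x hx hc => by rw [sgn_neg_piece ha0 x hx hc]; ring),
    int_congr_ae _ (fun _ => (1:ℝ)) 0 1 0 (sgn_deriv_piece ha1),
    intervalIntegral.integral_neg]
  simp [integral_id]
  norm_num

lemma monic2_eval {Q : Polynomial ℝ} (hm : Q.Monic) (hd : Q.natDegree = 2) (x : ℝ) :
    Q.eval x = x ^ 2 + Q.coeff 1 * x + Q.coeff 0 := by
  have h2 : Q.coeff 2 = 1 := by
    have := hm.coeff_natDegree
    rwa [hd] at this
  rw [Polynomial.eval_eq_sum_range, hd]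
  simp [Finset.sum_range_succ, h2]
  ring

lemma monic2_deriv_eval {Q : Polynomial ℝ} (hm : Q.Monic) (hd : Q.natDegree = 2) (x : ℝ) :
    (derivative Q).eval x = 2 * x + Q.coeff 1 := by
  have h2 : Q.coeff 2 = 1 := by
    have := hm.coeff_natDegree
    rwa [hd] at this
  have hlt : (derivative Q).natDegree < 2 := by
    have := Polynomial.natDegree_derivative_lt (p := Q) (by rw [hd]; norm_num)
    rwa [hd] at this
  rw [Polynomial.eval_eq_sum_range' hlt]
  simp [Finset.sum_range_succ, Polynomial.coeff_derivative, h2]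
  ring

lemma lin_int (p q a b : ℝ) :
    (∫ x in a..b, (p*x + q)) = (p*b^2/2 + q*b) - (p*a^2/2 + q*a) := by
  have h : ∀ x ∈ Set.uIcc a b,
      HasDerivAt (fun x : ℝ => p*x^2/2 + q*x) (p*x + q) x := by
    intro x _
    have h1 := (((hasDerivAt_pow 2 x).const_mul p).div_const 2).add
      ((hasDerivAt_id x).const_mul q)
    exact h1.congr_deriv (by simp; ring)
  rw [intervalIntegral.integral_eq_sub_of_hasDerivAt h
    (by apply Continuous.intervalIntegrable; continuity)]

lemma sob_lower {Q : Polynomial ℝ} (hm : Q.Monic) (hd : Q.natDegree = 2) :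
    3 ≤ sobNorm5 Q := by
  set b := Q.coeff 1 with hb
  set c := Q.coeff 0 with hc
  unfold sobNorm5
  simp only [monic2_eval hm hd, monic2_deriv_eval hm hd, ← hb, ← hc]
  have hcont : Continuous fun x : ℝ => |x ^ 2 + b * x + c| := by continuity
  have hcont2 : Continuous fun x : ℝ => x ^ 2 + b * x + c := by continuity
  have hsplit : (∫ x in (-2:ℝ)..0, |x ^ 2 + b * x + c|) =
      (∫ x in (-2:ℝ)..(-1), |x ^ 2 + b * x + c|) +
      ∫ x in (-1:ℝ)..0, |x ^ 2 + b * x + c| :=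
    (intervalIntegral.integral_add_adjacent_intervals
      (hcont.intervalIntegrable _ _) (hcont.intervalIntegrable _ _)).symm
  rw [hsplit]
  have h1 : (∫ x in (-2:ℝ)..(-1), (x ^ 2 + b * x + c)) ≤
      ∫ x in (-2:ℝ)..(-1), |x ^ 2 + b * x + c| :=
    intervalIntegral.integral_mono_on (by norm_num) (hcont2.intervalIntegrable _ _)
      (hcont.intervalIntegrable _ _) (fun x _ => le_abs_self _)
  have h2 : (∫ x in (-1:ℝ)..0, -(x ^ 2 + b * x + c)) ≤
      ∫ x in (-1:ℝ)..0, |x ^ 2 + b * x + c| :=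
    intervalIntegral.integral_mono_on (by norm_num)
      (hcont2.neg.intervalIntegrable _ _)
      (hcont.intervalIntegrable _ _) (fun x _ => neg_le_abs _)
  have h3 : (∫ x in (0:ℝ)..1, (2 * x + b)) ≤ ∫ x in (0:ℝ)..1, |2 * x + b| :=
    intervalIntegral.integral_mono_on (by norm_num)
      ((by continuity : Continuous fun x : ℝ => 2 * x + b).intervalIntegrable _ _)
      ((by continuity : Continuous fun x : ℝ => |2 * x + b|).intervalIntegrable _ _)
      (fun x _ => le_abs_self _)
  have e1 := quad_int b c (-2) (-1)
  have e2 : (∫ x in (-1:ℝ)..0, -(x ^ 2 + b * x + c)) = -∫ x in (-1:ℝ)..0, (x ^ 2 + b * x + c) :=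
    intervalIntegral.integral_neg
  have e2' := quad_int b c (-1) 0
  have e3 := lin_int 2 b 0 1
  rw [e1] at h1
  rw [e2, e2'] at h2
  rw [e3] at h3
  nlinarith [h1, h2, h3]

lemma Pa_monic (a : ℝ) : ((X + 1) * (X - C a) : Polynomial ℝ).Monic := by
  have h1 : (X + 1 : Polynomial ℝ).Monic := by
    simpa using Polynomial.monic_X_add_C (1 : ℝ)
  exact h1.mul (Polynomial.monic_X_sub_C a)

lemma Pa_deg (a : ℝ) : ((X + 1) * (X - C a) : Polynomial ℝ).natDegree = 2 := by
  have h1 : (X + 1 : Polynomial ℝ).Monic := by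
    simpa using Polynomial.monic_X_add_C (1 : ℝ)
  rw [h1.natDegree_mul (Polynomial.monic_X_sub_C a)]
  have : (X + 1 : Polynomial ℝ).natDegree = 1 := by
    simpa using Polynomial.natDegree_X_add_C (1 : ℝ)
  rw [this, Polynomial.natDegree_X_sub_C]

lemma sob_Pa {a : ℝ} (ha0 : 0 ≤ a) (ha1 : a ≤ 1) :
    sobNorm5 ((X + 1) * (X - C a)) = 3 := by
  have heval : ∀ x : ℝ, ((X + 1) * (X - C a) : Polynomial ℝ).eval x
      = x ^ 2 + (1 - a) * x + (-a) := by intro x; simp; ring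
  have hderiv : ∀ x : ℝ, (derivative ((X + 1) * (X - C a)) : Polynomial ℝ).eval x
      = 2 * x + (1 - a) := by intro x; simp; ring
  unfold sobNorm5
  simp only [heval, hderiv]
  have hcont : Continuous fun x : ℝ => |x ^ 2 + (1 - a) * x + (-a)| := by continuity
  have hsplit : (∫ x in (-2:ℝ)..0, |x ^ 2 + (1 - a) * x + (-a)|) =
      (∫ x in (-2:ℝ)..(-1), |x ^ 2 + (1 - a) * x + (-a)|) +
      ∫ x in (-1:ℝ)..0, |x ^ 2 + (1 - a) * x + (-a)| :=
    (intervalIntegral.integral_add_adjacent_intervals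
      (hcont.intervalIntegrable _ _) (hcont.intervalIntegrable _ _)).symm
  rw [hsplit]
  have h1 : (∫ x in (-2:ℝ)..(-1), |x ^ 2 + (1 - a) * x + (-a)|) =
      ∫ x in (-2:ℝ)..(-1), (x ^ 2 + (1 - a) * x + (-a)) := by
    refine intervalIntegral.integral_congr fun x hx => ?_
    rw [Set.uIcc_of_le (by norm_num)] at hx
    have : x ^ 2 + (1 - a) * x + (-a) = (x + 1) * (x - a) := by ring
    rw [this]
    exact abs_of_nonneg (by nlinarith [hx.1, hx.2])
  have h2 : (∫ x in (-1:ℝ)..0, |x ^ 2 + (1 - a) * x + (-a)|) =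
      ∫ x in (-1:ℝ)..0, -(x ^ 2 + (1 - a) * x + (-a)) := by
    refine intervalIntegral.integral_congr fun x hx => ?_
    rw [Set.uIcc_of_le (by norm_num)] at hx
    have : x ^ 2 + (1 - a) * x + (-a) = (x + 1) * (x - a) := by ring
    rw [this]
    exact abs_of_nonpos (mul_nonpos_of_nonneg_of_nonpos (by linarith [hx.1]) (by linarith [hx.2]))
  have h3 : (∫ x in (0:ℝ)..1, |2 * x + (1 - a)|) =
      ∫ x in (0:ℝ)..1, (2 * x + (1 - a)) := by
    refine intervalIntegral.integral_congr fun x hx => ?_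
    rw [Set.uIcc_of_le (by norm_num)] at hx
    exact abs_of_nonneg (by linarith [hx.1])
  rw [h1, h2, h3, intervalIntegral.integral_neg, quad_int, quad_int, lin_int]
  ring

/-- For every `a ∈ [0,1]` the polynomial `(x+1)(x-a)` satisfies both orthogonality
conditions and is thus minimal of degree 2 for the Sobolev norm
`∫_{-2}^0 |f| + ∫_0^1 |f'|`; in particular the minimal polynomial is not unique. -/
theorem example_continuous_nonuniqueness :
    (∀ a ∈ Set.Icc (0 : ℝ) 1,
      (∫ x in (-2 : ℝ)..0, Real.sign ((x + 1) * (x - a))) = 0 ∧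
      ((∫ x in (-2 : ℝ)..0, x * Real.sign ((x + 1) * (x - a))) +
        ∫ x in (0 : ℝ)..1, Real.sign (2 * x + 1 - a)) = 0 ∧
      ((X + 1) * (X - C a) : Polynomial ℝ).Monic ∧
      ((X + 1) * (X - C a) : Polynomial ℝ).natDegree = 2 ∧
      (∀ Q : Polynomial ℝ, Q.Monic → Q.natDegree = 2 →
        sobNorm5 ((X + 1) * (X - C a)) ≤ sobNorm5 Q)) ∧
    (∃ P₁ P₂ : Polynomial ℝ, P₁ ≠ P₂ ∧
      P₁.Monic ∧ P₁.natDegree = 2 ∧ P₂.Monic ∧ P₂.natDegree = 2 ∧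
      (∀ Q : Polynomial ℝ, Q.Monic → Q.natDegree = 2 → sobNorm5 P₁ ≤ sobNorm5 Q) ∧
      (∀ Q : Polynomial ℝ, Q.Monic → Q.natDegree = 2 → sobNorm5 P₂ ≤ sobNorm5 Q)) := by
  constructor
  · rintro a ⟨ha0, ha1⟩
    refine ⟨sign_int1 ha0, sign_int2 ha0 ha1, Pa_monic a, Pa_deg a, fun Q hm hd => ?_⟩
    rw [sob_Pa ha0 ha1]
    exact sob_lower hm hd
  · refine ⟨(X + 1) * (X - C 0), (X + 1) * (X - C 1), ?_, Pa_monic 0, Pa_deg 0,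
      Pa_monic 1, Pa_deg 1, ?_, ?_⟩
    · intro h
      have := congrArg (fun p => Polynomial.eval (0:ℝ) p) h
      simp at this
    · intro Q hm hd
      rw [sob_Pa (by norm_num) (by norm_num)]
      exact sob_lower hm hd
    · intro Q hm hd
      rw [sob_Pa (by norm_num) (by norm_num)]
      exact sob_lower hm hd
end

section
/- The polynomial P(x) = x³ is the unique monic polynomial of degree 3 minimizing the norm ‖f‖ = ∫_{−1}^1 |f(x)| dx + |f'(0)|, and ‖x³‖ = 1/2. Moreover P does not satisfy the orthogonality condition: ∫_{−1}^1 x·sgn(x³) dx = 1 ≠ 0. -/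
open Polynomial intervalIntegral

/-- The discrete Sobolev 1-norm `‖f‖ = ∫_{-1}^1 |f| dx + |f'(0)|`. -/
noncomputable def sobNorm6 (f : Polynomial ℝ) : ℝ :=
  (∫ x in (-1 : ℝ)..1, |f.eval x|) + |(derivative f).eval 0|

lemma sob6_cubic_integral (a b c s t : ℝ) : (∫ x in s..t, (x^3 + a*x^2 + b*x + c)) =
    (t^4 - s^4)/4 + a*((t^3-s^3)/3) + b*((t^2-s^2)/2) + c*(t-s) := by
  have h1 : IntervalIntegrable (fun x : ℝ => x^3) MeasureTheory.volume s t := by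
    apply Continuous.intervalIntegrable; continuity
  have h2 : IntervalIntegrable (fun x : ℝ => a*x^2) MeasureTheory.volume s t := by
    apply Continuous.intervalIntegrable; continuity
  have h3 : IntervalIntegrable (fun x : ℝ => b*x) MeasureTheory.volume s t := by
    apply Continuous.intervalIntegrable; continuity
  have h4 : IntervalIntegrable (fun x : ℝ => (c:ℝ)) MeasureTheory.volume s t := by
    apply Continuous.intervalIntegrable; continuity
  rw [integral_add (h1.add h2 |>.add h3) h4, integral_add (h1.add h2) h3,
    integral_add h1 h2, integral_pow, integral_const_mul, integral_const_mul, integral_pow,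
    integral_id, integral_const]
  simp only [smul_eq_mul]; push_cast; ring

lemma sob6_zero_of_nonneg {g : ℝ → ℝ} (hg : Continuous g) {a b : ℝ} (hab : a < b)
    (hnn : ∀ x ∈ Set.Icc a b, 0 ≤ g x) (hz : (∫ x in a..b, g x) = 0) :
    ∀ x ∈ Set.Icc a b, g x = 0 := by
  by_contra h
  push_neg at h
  obtain ⟨x₀, hx₀, hne⟩ := h
  have hpos : 0 < g x₀ := lt_of_le_of_ne (hnn x₀ hx₀) (Ne.symm hne)
  have hopen : IsOpen {x : ℝ | 0 < g x} := isOpen_lt continuous_const hg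
  obtain ⟨δ, hδ, hball⟩ := Metric.isOpen_iff.1 hopen x₀ hpos
  have hsub : Set.Ioo (max a (x₀ - δ)) (min b (x₀ + δ)) ⊆ Function.support g ∩ Set.Ioc a b := by
    intro x hx
    have h1 : a < x := lt_of_le_of_lt (le_max_left _ _) hx.1
    have h2 : x ≤ b := le_of_lt (lt_of_lt_of_le hx.2 (min_le_left _ _))
    have hxball : x ∈ Metric.ball x₀ δ := by
      rw [Real.ball_eq_Ioo]
      exact ⟨lt_of_le_of_lt (le_max_right _ _) hx.1, lt_of_lt_of_le hx.2 (min_le_right _ _)⟩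
    exact ⟨ne_of_gt (hball hxball), h1, h2⟩
  have hlt : max a (x₀ - δ) < min b (x₀ + δ) := by
    rcases hx₀ with ⟨ha, hb⟩
    simp only [max_lt_iff, lt_min_iff]
    exact ⟨⟨hab, by linarith⟩, ⟨by linarith, by linarith⟩⟩
  have hmeas : 0 < MeasureTheory.volume (Function.support g ∩ Set.Ioc a b) := by
    calc (0:ENNReal) < MeasureTheory.volume (Set.Ioo (max a (x₀ - δ)) (min b (x₀ + δ))) := by
          rw [Real.volume_Ioo]; simp [hlt, sub_pos]
      _ ≤ _ := MeasureTheory.measure_mono hsub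
  have hae : 0 ≤ᵐ[MeasureTheory.volume.restrict (Set.uIoc a b)] g := by
    rw [Set.uIoc_of_le hab.le]
    exact (MeasureTheory.ae_restrict_iff' measurableSet_Ioc).2 (Filter.Eventually.of_forall
      (fun x hx => hnn x ⟨hx.1.le, hx.2⟩))
  have := (intervalIntegral.integral_pos_iff_support_of_nonneg_ae' hae
    (hg.intervalIntegrable a b)).2 ⟨hab, hmeas⟩
  rw [hz] at this
  exact lt_irrefl 0 this

lemma sob6_eval (Q : Polynomial ℝ) (hm : Q.Monic) (hd : Q.natDegree = 3) (x : ℝ) :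
    Q.eval x = x^3 + Q.coeff 2 * x^2 + Q.coeff 1 * x + Q.coeff 0 := by
  have h3 : Q.coeff 3 = 1 := by
    have := hm.coeff_natDegree
    rwa [hd] at this
  rw [Polynomial.eval_eq_sum_range, hd]
  simp [Finset.sum_range_succ, h3]
  ring

lemma sob6_eq_Xcube (Q : Polynomial ℝ) (hm : Q.Monic) (hd : Q.natDegree = 3)
    (h0 : Q.coeff 0 = 0) (h1 : Q.coeff 1 = 0) (h2 : Q.coeff 2 = 0) : Q = X^3 := by
  ext n
  have h3 : Q.coeff 3 = 1 := by have := hm.coeff_natDegree; rwa [hd] at this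
  rcases n with _|_|_|_|n
  · simpa using h0
  · simpa using h1
  · simpa using h2
  · simpa using h3
  · rw [Polynomial.coeff_X_pow]
    have : Q.natDegree < n + 4 := by omega
    simp [Polynomial.coeff_eq_zero_of_natDegree_lt this]

lemma sob6_X3 : sobNorm6 (X ^ 3 : Polynomial ℝ) = 1 / 2 := by
  unfold sobNorm6
  have hder : (derivative (X ^ 3 : Polynomial ℝ)).eval 0 = 0 := by simp
  simp only [Polynomial.eval_pow, Polynomial.eval_X, hder, abs_zero, add_zero]
  have habs : Continuous fun x : ℝ => |x^3| := by continuity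
  rw [← intervalIntegral.integral_add_adjacent_intervals (a := (-1:ℝ)) (b := 0) (c := 1)
    (habs.intervalIntegrable _ _) (habs.intervalIntegrable _ _)]
  have l1 : (∫ x in (-1:ℝ)..0, |x^3|) = 1/4 := by
    rw [intervalIntegral.integral_congr (g := fun x => -x^3)
      (fun x hx => by
        rw [Set.uIcc_of_le (by norm_num : (-1:ℝ) ≤ 0)] at hx
        exact abs_of_nonpos (Odd.pow_nonpos ⟨1, by norm_num⟩ hx.2))]
    rw [intervalIntegral.integral_neg, integral_pow]; norm_num
  have l2 : (∫ x in (0:ℝ)..1, |x^3|) = 1/4 := by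
    rw [intervalIntegral.integral_congr (g := fun x => x^3)
      (fun x hx => by
        rw [Set.uIcc_of_le (by norm_num : (0:ℝ) ≤ 1)] at hx
        exact abs_of_nonneg (pow_nonneg hx.1 3))]
    rw [integral_pow]; norm_num
  rw [l1, l2]; norm_num

lemma sob6_sign : (∫ x in (-1:ℝ)..1, x * Real.sign (x^3)) = 1 := by
  have key : ∀ x : ℝ, x * Real.sign (x^3) = |x| := by
    intro x
    rcases lt_trichotomy x 0 with h|h|h
    · rw [Real.sign_of_neg (by nlinarith [pow_pos (neg_pos.2 h) 3]), abs_of_neg h]; ring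
    · simp [h]
    · rw [Real.sign_of_pos (pow_pos h 3), abs_of_pos h]; ring
  simp only [key]
  rw [← intervalIntegral.integral_add_adjacent_intervals (a := (-1:ℝ)) (b := 0) (c := 1)
    (continuous_abs.intervalIntegrable _ _) (continuous_abs.intervalIntegrable _ _)]
  have l1 : (∫ x in (-1:ℝ)..0, |x|) = 1/2 := by
    rw [intervalIntegral.integral_congr (g := fun x => -x)
      (fun x hx => by
        rw [Set.uIcc_of_le (by norm_num : (-1:ℝ) ≤ 0)] at hx
        exact abs_of_nonpos hx.2)]
    rw [intervalIntegral.integral_neg, integral_id]; norm_num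
  have l2 : (∫ x in (0:ℝ)..1, |x|) = 1/2 := by
    rw [intervalIntegral.integral_congr (g := fun x => x)
      (fun x hx => by
        rw [Set.uIcc_of_le (by norm_num : (0:ℝ) ≤ 1)] at hx
        exact abs_of_nonneg hx.1)]
    rw [integral_id]; norm_num
  rw [l1, l2]; norm_num

/-- Structure of the norm of a monic cubic. -/
lemma sob6_structure (Q : Polynomial ℝ) (hm : Q.Monic) (hd : Q.natDegree = 3) :
    sobNorm6 Q = (∫ x in (0:ℝ)..1, (|Q.eval x| - Q.eval x))
      + (∫ x in (-1:ℝ)..0, (|Q.eval x| + Q.eval x))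
      + (1/2 + Q.coeff 1) + |Q.coeff 1| := by
  set a := Q.coeff 2
  set b := Q.coeff 1
  set c := Q.coeff 0
  have hc : Continuous fun x : ℝ => Q.eval x := Q.continuous
  have hca : Continuous fun x : ℝ => |Q.eval x| := continuous_abs.comp hc
  have hev : ∀ x : ℝ, Q.eval x = x^3 + a*x^2 + b*x + c := sob6_eval Q hm hd
  have hder : (derivative Q).eval 0 = b := by
    rw [← Polynomial.coeff_zero_eq_eval_zero, Polynomial.coeff_derivative]
    simp
    rfl
  have I1 : (∫ x in (0:ℝ)..1, Q.eval x) = 1/4 + a/3 + b/2 + c := by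
    simp only [hev]; rw [sob6_cubic_integral]; ring
  have I2 : (∫ x in (-1:ℝ)..0, Q.eval x) = -(1/4) + a/3 - b/2 + c := by
    simp only [hev]; rw [sob6_cubic_integral]; ring
  have hsplit : (∫ x in (-1:ℝ)..1, |Q.eval x|)
      = (∫ x in (-1:ℝ)..0, |Q.eval x|) + (∫ x in (0:ℝ)..1, |Q.eval x|) :=
    (intervalIntegral.integral_add_adjacent_intervals
      (hca.intervalIntegrable _ _) (hca.intervalIntegrable _ _)).symm
  have e1 : (∫ x in (0:ℝ)..1, (|Q.eval x| - Q.eval x))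
      = (∫ x in (0:ℝ)..1, |Q.eval x|) - (∫ x in (0:ℝ)..1, Q.eval x) :=
    intervalIntegral.integral_sub (hca.intervalIntegrable _ _) (hc.intervalIntegrable _ _)
  have e2 : (∫ x in (-1:ℝ)..0, (|Q.eval x| + Q.eval x))
      = (∫ x in (-1:ℝ)..0, |Q.eval x|) + (∫ x in (-1:ℝ)..0, Q.eval x) :=
    intervalIntegral.integral_add (hca.intervalIntegrable _ _) (hc.intervalIntegrable _ _)
  unfold sobNorm6
  rw [hsplit, hder, e1, e2, I1, I2]
  ring

/-- `x³` is the unique monic cubic minimizing `∫_{-1}^1 |f| + |f'(0)|`, its norm is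
`1/2`, and it does not satisfy the orthogonality condition since
`∫_{-1}^1 x sgn(x³) dx = 1 ≠ 0`. -/
theorem example_unique_minimal_no_orthogonality :
    sobNorm6 (X ^ 3 : Polynomial ℝ) = 1 / 2 ∧
    (∀ Q : Polynomial ℝ, Q.Monic → Q.natDegree = 3 →
      sobNorm6 (X ^ 3 : Polynomial ℝ) ≤ sobNorm6 Q) ∧
    (∀ Q : Polynomial ℝ, Q.Monic → Q.natDegree = 3 →
      sobNorm6 Q = sobNorm6 (X ^ 3 : Polynomial ℝ) → Q = X ^ 3) ∧
    (∫ x in (-1 : ℝ)..1, x * Real.sign (x ^ 3)) = 1 ∧ (1 : ℝ) ≠ 0 := by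
  have hX3 := sob6_X3
  refine ⟨hX3, ?_, ?_, sob6_sign, one_ne_zero⟩
  · intro Q hm hd
    rw [hX3, sob6_structure Q hm hd]
    have hA : 0 ≤ ∫ x in (0:ℝ)..1, (|Q.eval x| - Q.eval x) :=
      intervalIntegral.integral_nonneg (by norm_num)
        (fun x _ => by simp [sub_nonneg, le_abs_self])
    have hB : 0 ≤ ∫ x in (-1:ℝ)..0, (|Q.eval x| + Q.eval x) :=
      intervalIntegral.integral_nonneg (by norm_num)
        (fun x _ => by nlinarith [neg_abs_le (Q.eval x)])
    have := neg_le_abs (Q.coeff 1)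
    linarith
  · intro Q hm hd heq
    rw [hX3] at heq
    rw [sob6_structure Q hm hd] at heq
    set a := Q.coeff 2 with ha
    set b := Q.coeff 1 with hb
    set c := Q.coeff 0 with hcdef
    have hA : 0 ≤ ∫ x in (0:ℝ)..1, (|Q.eval x| - Q.eval x) :=
      intervalIntegral.integral_nonneg (by norm_num)
        (fun x _ => by simp [sub_nonneg, le_abs_self])
    have hB : 0 ≤ ∫ x in (-1:ℝ)..0, (|Q.eval x| + Q.eval x) :=
      intervalIntegral.integral_nonneg (by norm_num)
        (fun x _ => by nlinarith [neg_abs_le (Q.eval x)])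
    have hbabs : -b ≤ |b| := neg_le_abs b
    -- all slack terms vanish
    have hA0 : (∫ x in (0:ℝ)..1, (|Q.eval x| - Q.eval x)) = 0 := by
      have := neg_le_abs b; linarith
    have hB0 : (∫ x in (-1:ℝ)..0, (|Q.eval x| + Q.eval x)) = 0 := by
      have := neg_le_abs b; linarith
    have hbneg : b ≤ 0 := by
      have habs : |b| = -b := by linarith
      rcases abs_cases b with ⟨h1, h2⟩ | ⟨h1, h2⟩
      · linarith
      · linarith
    have hc : Continuous fun x : ℝ => Q.eval x := Q.continuous
    have hca : Continuous fun x : ℝ => |Q.eval x| := continuous_abs.comp hc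
    have hQpos : ∀ x ∈ Set.Icc (0:ℝ) 1, 0 ≤ Q.eval x := by
      intro x hx
      have := sob6_zero_of_nonneg (g := fun x => |Q.eval x| - Q.eval x) (hca.sub hc) (by norm_num)
        (fun y _ => by simp [sub_nonneg, le_abs_self]) hA0 x hx
      have h2 := abs_nonneg (Q.eval x)
      have h3 := le_abs_self (Q.eval x)
      linarith [this]
    have hQneg : ∀ x ∈ Set.Icc (-1:ℝ) 0, Q.eval x ≤ 0 := by
      intro x hx
      have := sob6_zero_of_nonneg (g := fun x => |Q.eval x| + Q.eval x) (hca.add hc) (by norm_num)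
        (fun y _ => by nlinarith [neg_abs_le (Q.eval y)]) hB0 x hx
      have h2 := abs_nonneg (Q.eval x)
      linarith [this]
    have hev : ∀ x : ℝ, Q.eval x = x^3 + a*x^2 + b*x + c := sob6_eval Q hm hd
    -- c = 0
    have hc0 : c = 0 := by
      have h1 := hQpos 0 (by norm_num)
      have h2 := hQneg 0 (by norm_num)
      rw [hev] at h1 h2
      norm_num at h1 h2
      linarith
    -- key pointwise fact for b
    have hkey : ∀ t : ℝ, 0 < t → t ≤ 1 → 0 ≤ t^2 + b := by
      intro t ht ht1
      have h1 := hQpos t ⟨ht.le, ht1⟩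
      have h2 := hQneg (-t) ⟨by linarith, by linarith⟩
      rw [hev] at h1 h2
      rw [hc0] at h1 h2
      nlinarith
    -- b = 0
    have hb0 : b = 0 := by
      by_contra hbne
      have hblt : b < 0 := lt_of_le_of_ne hbneg hbne
      set t := min 1 (Real.sqrt (-b/2)) with htd
      have hsq : 0 < Real.sqrt (-b/2) := Real.sqrt_pos.2 (by linarith)
      have ht : 0 < t := lt_min one_pos hsq
      have ht1 : t ≤ 1 := min_le_left _ _
      have hts : t ≤ Real.sqrt (-b/2) := min_le_right _ _
      have ht2 : t^2 ≤ -b/2 := by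
        have := Real.sq_sqrt (by linarith : (0:ℝ) ≤ -b/2)
        nlinarith
      have := hkey t ht ht1
      linarith
    have hkey2 : ∀ t : ℝ, 0 < t → t ≤ 1 → 0 ≤ t + a ∧ a ≤ t := by
      intro t ht ht1
      have h1 := hQpos t ⟨ht.le, ht1⟩
      have h2 := hQneg (-t) ⟨by linarith, by linarith⟩
      rw [hev] at h1 h2
      rw [hc0, hb0] at h1 h2
      constructor
      · nlinarith [mul_pos ht ht]
      · nlinarith [mul_pos ht ht]
    have ha0 : a = 0 := by
      by_contra hane
      rcases lt_or_gt_of_ne hane with halt | hagt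
      · set t := min 1 (-a/2) with htd
        have ht : 0 < t := lt_min one_pos (by linarith)
        have ht1 : t ≤ 1 := min_le_left _ _
        have hts : t ≤ -a/2 := min_le_right _ _
        have := (hkey2 t ht ht1).1
        linarith
      · set t := min 1 (a/2) with htd
        have ht : 0 < t := lt_min one_pos (by linarith)
        have ht1 : t ≤ 1 := min_le_left _ _
        have hts : t ≤ a/2 := min_le_right _ _
        have := (hkey2 t ht ht1).2
        linarith
    exact sob6_eq_Xcube Q hm hd hc0 hb0 ha0
end

section
/- Necessity of the orthogonality condition for continuous measures, p = 1: if μ_0,…,μ_m are positive finite Borel measures on ℝ each of which gives zero mass to every singleton, and P_n is a monic polynomial of degree n minimizing ‖f‖ = Σ_{k=0}^m ∫ |f^{(k)}| dμ_k among monic polynomials of degree n, then Σ_{k=0}^m ∫ q^{(k)} sgn(P_n^{(k)}) dμ_k = 0 for every polynomial q of degree at most n−1. -/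
open Polynomial MeasureTheory Filter

/-- The support of a Borel measure on `ℝ`. -/
def measSupport (μ : Measure ℝ) : Set ℝ :=
  {x : ℝ | ∀ U : Set ℝ, IsOpen U → x ∈ U → μ U ≠ 0}

private lemma abs_add_eq {a b t : ℝ} (ha : a ≠ 0) (h : |t * b| < |a|) :
    |a + t * b| = |a| + t * b * Real.sign a := by
  rcases lt_or_gt_of_ne ha with h1 | h1
  · rw [Real.sign_of_neg h1, abs_of_neg h1]
    have : a + t * b < 0 := by
      have := neg_abs_le (t * b); have := abs_of_neg h1; linarith [abs_lt.mp h]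
    rw [abs_of_neg this]; ring
  · rw [Real.sign_of_pos h1, abs_of_pos h1]
    have : 0 < a + t * b := by
      have := neg_abs_le (t * b); have := abs_of_pos h1; linarith [abs_lt.mp h]
    rw [abs_of_pos this]; ring

private lemma tendsto_quot (a b : ℝ) (hab : a ≠ 0 ∨ b = 0) :
    Tendsto (fun j : ℕ => (|a + ((j : ℝ) + 1)⁻¹ * b| - |a|) * ((j : ℝ) + 1)) atTop
      (nhds (b * Real.sign a)) := by
  rcases hab with ha | hb
  · have hev : ∀ᶠ j : ℕ in atTop,
        (|a + ((j : ℝ) + 1)⁻¹ * b| - |a|) * ((j : ℝ) + 1) = b * Real.sign a := by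
      have hbd : Tendsto (fun j : ℕ => ((j : ℝ) + 1)⁻¹ * |b|) atTop (nhds 0) := by
        have := tendsto_one_div_add_atTop_nhds_zero_nat (𝕜 := ℝ)
        simpa using this.mul_const |b|
      filter_upwards [hbd.eventually (gt_mem_nhds (abs_pos.mpr ha))] with j hj
      have hjpos : (0 : ℝ) < (j : ℝ) + 1 := by positivity
      have h' : |((j : ℝ) + 1)⁻¹ * b| < |a| := by
        rwa [abs_mul, abs_of_pos (inv_pos.mpr hjpos)]
      rw [abs_add_eq ha h']
      field_simp
      ring
    exact Tendsto.congr' (hev.mono fun j h => h.symm) tendsto_const_nhds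
  · subst hb; simpa using (tendsto_const_nhds :
      Tendsto (fun _ : ℕ => (0 : ℝ)) atTop (nhds 0))

private lemma iterate_derivative_add' (p q : Polynomial ℝ) (k : ℕ) :
    derivative^[k] (p + q) = derivative^[k] p + derivative^[k] q := by
  induction k with
  | zero => simp
  | succ k ih => simp [Function.iterate_succ_apply', ih]

private lemma tendsto_integral_quot (μ : Measure ℝ) [IsFiniteMeasure μ]
    (hcont : ∀ x : ℝ, μ {x} = 0)
    (hint : ∀ r : Polynomial ℝ, Integrable (fun x => r.eval x) μ)
    (Pk qk : Polynomial ℝ) (hor : Pk ≠ 0 ∨ qk = 0) :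
    Tendsto (fun j : ℕ => ∫ x : ℝ,
        (|Pk.eval x + ((j : ℝ) + 1)⁻¹ * qk.eval x| - |Pk.eval x|) * ((j : ℝ) + 1) ∂ μ)
      atTop (nhds (∫ x : ℝ, qk.eval x * Real.sign (Pk.eval x) ∂ μ)) := by
  have : NoAtoms μ := ⟨hcont⟩
  apply tendsto_integral_of_dominated_convergence (fun x => |qk.eval x|)
  · intro j
    exact (Continuous.aestronglyMeasurable (by fun_prop))
  · exact (hint qk).abs
  · intro j
    refine Eventually.of_forall fun x => ?_
    have hjpos : (0 : ℝ) < (j : ℝ) + 1 := by positivity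
    have h1 := abs_abs_sub_abs_le_abs_sub (Pk.eval x + ((j : ℝ) + 1)⁻¹ * qk.eval x) (Pk.eval x)
    rw [add_sub_cancel_left] at h1
    have h2 : |((j : ℝ) + 1)⁻¹ * qk.eval x| = ((j : ℝ) + 1)⁻¹ * |qk.eval x| := by
      rw [abs_mul, abs_of_pos (inv_pos.mpr hjpos)]
    rw [Real.norm_eq_abs, abs_mul, abs_of_pos hjpos]
    refine le_trans (mul_le_mul_of_nonneg_right (h1.trans_eq h2) hjpos.le) (le_of_eq ?_)
    field_simp
  · rcases hor with hPk | hqk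
    · have hfin : {x : ℝ | Pk.eval x = 0}.Finite := Polynomial.finite_setOf_isRoot hPk
      have hz : μ {x : ℝ | Pk.eval x = 0} = 0 := by
        haveI : NullSingletonClass μ := ⟨hcont⟩; exact hfin.countable.measure_zero μ
      rw [ae_iff]
      refine measure_mono_null ?_ hz
      intro x hx
      simp only [Set.mem_setOf_eq] at hx ⊢
      by_contra hne
      exact hx (tendsto_quot _ _ (Or.inl hne))
    · subst hqk
      refine Eventually.of_forall fun x => ?_
      simpa using tendsto_quot (Pk.eval x) 0 (Or.inr rfl)

private lemma iterate_deriv_ne_zero {P : Polynomial ℝ} (hPm : P.Monic) {k : ℕ}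
    (hk : k ≤ P.natDegree) : derivative^[k] P ≠ 0 := by
  intro h
  have hc := Polynomial.coeff_iterate_derivative P (P.natDegree - k) (k := k)
  rw [h] at hc
  rw [Nat.sub_add_cancel hk, hPm.coeff_natDegree] at hc
  rw [Polynomial.coeff_zero, nsmul_eq_mul, mul_one] at hc
  have h2 : P.natDegree.descFactorial k ≠ 0 := by
    simp [Nat.descFactorial_eq_zero_iff_lt, Nat.not_lt.mpr hk]
  exact h2 (by exact_mod_cast hc.symm)

/-- Necessity of the orthogonality condition for continuous measures, `p = 1`: a
minimal monic polynomial for the Sobolev `1`-norm with atomless measures satisfies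
the sign orthogonality condition against all lower-degree polynomials. -/
theorem sobolev_L1_necessary_condition_continuous
    (m n : ℕ) (μ : Fin (m + 1) → Measure ℝ)
    (hfin : ∀ k, IsFiniteMeasure (μ k))
    (hcont : ∀ (k : Fin (m + 1)) (x : ℝ), μ k {x} = 0)
    (hint : ∀ (k : Fin (m + 1)) (q : Polynomial ℝ),
      Integrable (fun x => q.eval x) (μ k))
    (hinf : (convexHull ℝ (measSupport (μ 0))).Infinite)
    (P : Polynomial ℝ) (hPm : P.Monic) (hPd : P.natDegree = n)
    (hmin : ∀ Q : Polynomial ℝ, Q.Monic → Q.natDegree = n →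
      ∑ k : Fin (m + 1), ∫ x : ℝ, |(derivative^[(k : ℕ)] P).eval x| ∂ μ k ≤
      ∑ k : Fin (m + 1), ∫ x : ℝ, |(derivative^[(k : ℕ)] Q).eval x| ∂ μ k) :
    ∀ q : Polynomial ℝ, q.degree < n →
      ∑ k : Fin (m + 1),
        ∫ x : ℝ, (derivative^[(k : ℕ)] q).eval x *
          Real.sign ((derivative^[(k : ℕ)] P).eval x) ∂ μ k = 0 := by
  have := hfin
  have key : ∀ q : Polynomial ℝ, q.degree < n →
      0 ≤ ∑ k : Fin (m + 1),
        ∫ x : ℝ, (derivative^[(k : ℕ)] q).eval x *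
          Real.sign ((derivative^[(k : ℕ)] P).eval x) ∂ μ k := by
    intro q hq
    by_cases hq0 : q = 0
    · subst hq0; simp
    have hqd : q.natDegree < n := (Polynomial.natDegree_lt_iff_degree_lt hq0).mpr
      (by exact_mod_cast hq)
    have hPdeg : P.degree = (n : ℕ) := by
      rw [Polynomial.degree_eq_natDegree hPm.ne_zero, hPd]
    -- each k: either P^(k) ≠ 0 or q^(k) = 0
    have hor : ∀ k : Fin (m + 1), derivative^[(k : ℕ)] P ≠ 0 ∨ derivative^[(k : ℕ)] q = 0 := by
      intro k
      rcases le_or_gt (k : ℕ) n with hk | hk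
      · exact Or.inl (iterate_deriv_ne_zero hPm (hPd ▸ hk))
      · exact Or.inr (Polynomial.iterate_derivative_eq_zero (lt_trans hqd hk))
    -- convergence of the sum of difference quotients
    have htend : Tendsto (fun j : ℕ => ∑ k : Fin (m + 1),
        ∫ x : ℝ, (|(derivative^[(k : ℕ)] P).eval x +
            ((j : ℝ) + 1)⁻¹ * (derivative^[(k : ℕ)] q).eval x|
          - |(derivative^[(k : ℕ)] P).eval x|) * ((j : ℝ) + 1) ∂ μ k) atTop
        (nhds (∑ k : Fin (m + 1),
          ∫ x : ℝ, (derivative^[(k : ℕ)] q).eval x *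
            Real.sign ((derivative^[(k : ℕ)] P).eval x) ∂ μ k)) := by
      apply tendsto_finset_sum
      intro k _
      exact tendsto_integral_quot (μ k) (hcont k) (hint k) _ _ (hor k)
    -- each term of the sequence is nonneg
    refine ge_of_tendsto htend (Eventually.of_forall fun j => ?_)
    set t : ℝ := ((j : ℝ) + 1)⁻¹ with ht
    have hjpos : (0 : ℝ) < (j : ℝ) + 1 := by positivity
    have htpos : 0 < t := inv_pos.mpr hjpos
    set Q : Polynomial ℝ := P + t • q with hQ
    have hdlt : (t • q).degree < P.degree := by
      calc (t • q).degree ≤ q.degree := Polynomial.degree_smul_le t q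
        _ < (n : ℕ) := by exact_mod_cast hq
        _ = P.degree := hPdeg.symm
    have hQm : Q.Monic := hPm.add_of_left hdlt
    have hQd : Q.natDegree = n := by
      have : Q.degree = P.degree := Polynomial.degree_add_eq_left_of_degree_lt hdlt
      rw [← hPd]
      exact Polynomial.natDegree_eq_of_degree_eq this
    have hderivQ : ∀ k : Fin (m + 1), ∀ x : ℝ,
        (derivative^[(k : ℕ)] Q).eval x
          = (derivative^[(k : ℕ)] P).eval x + t * (derivative^[(k : ℕ)] q).eval x := by
      intro k x
      rw [hQ, iterate_derivative_add', Polynomial.iterate_derivative_smul]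
      simp [smul_eq_mul]
    have hintabs : ∀ (k : Fin (m + 1)) (r : Polynomial ℝ),
        Integrable (fun x => |r.eval x|) (μ k) := fun k r => (hint k r).abs
    -- rewrite each integral
    have hrw : ∀ k : Fin (m + 1),
        ∫ x : ℝ, (|(derivative^[(k : ℕ)] P).eval x + t * (derivative^[(k : ℕ)] q).eval x|
          - |(derivative^[(k : ℕ)] P).eval x|) * ((j : ℝ) + 1) ∂ μ k
        = ((∫ x : ℝ, |(derivative^[(k : ℕ)] Q).eval x| ∂ μ k)
          - ∫ x : ℝ, |(derivative^[(k : ℕ)] P).eval x| ∂ μ k) * ((j : ℝ) + 1) := by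
      intro k
      rw [← integral_sub (hintabs k _) (hintabs k _), ← integral_mul_const]
      refine integral_congr_ae (Eventually.of_forall fun x => ?_)
      simp only [Pi.sub_apply]
      rw [hderivQ k x]
    calc (0 : ℝ) ≤ ((∑ k : Fin (m + 1), ∫ x : ℝ, |(derivative^[(k : ℕ)] Q).eval x| ∂ μ k)
          - ∑ k : Fin (m + 1), ∫ x : ℝ, |(derivative^[(k : ℕ)] P).eval x| ∂ μ k)
            * ((j : ℝ) + 1) := by
          apply mul_nonneg _ hjpos.le
          linarith [hmin Q hQm hQd]
      _ = ∑ k : Fin (m + 1),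
          ∫ x : ℝ, (|(derivative^[(k : ℕ)] P).eval x + t * (derivative^[(k : ℕ)] q).eval x|
            - |(derivative^[(k : ℕ)] P).eval x|) * ((j : ℝ) + 1) ∂ μ k := by
          rw [Finset.sum_congr rfl (fun k _ => hrw k), ← Finset.sum_mul,
            Finset.sum_sub_distrib]
  intro q hq
  have h1 := key q hq
  have h2 := key (-q) (by rwa [Polynomial.degree_neg])
  have hneg : ∑ k : Fin (m + 1),
        ∫ x : ℝ, (derivative^[(k : ℕ)] (-q)).eval x *
          Real.sign ((derivative^[(k : ℕ)] P).eval x) ∂ μ k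
      = - ∑ k : Fin (m + 1),
        ∫ x : ℝ, (derivative^[(k : ℕ)] q).eval x *
          Real.sign ((derivative^[(k : ℕ)] P).eval x) ∂ μ k := by
    rw [← Finset.sum_neg_distrib]
    refine Finset.sum_congr rfl fun k _ => ?_
    rw [← integral_neg]
    refine integral_congr_ae (Eventually.of_forall fun x => ?_)
    simp [Polynomial.iterate_derivative_neg]
  rw [hneg] at h2
  linarith
end

section
/- If a discrete Sobolev p-norm is equivalent to a norm for which the multiplication operator is bounded with constant C₃, with equivalence constants C₁‖q‖* ≤ ‖q‖ ≤ C₂‖q‖*, then every zero z₀ of every minimal monic polynomial P_n (with respect to ‖·‖) satisfies |z₀| ≤ 2C₂C₃/C₁. -/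
open Polynomial

/-- Zeros of minimal polynomials are uniformly bounded when the norm is equivalent
to one for which the multiplication operator is bounded: every zero `z₀` of a
minimal monic polynomial satisfies `|z₀| ≤ 2 C₂ C₃ / C₁`. -/
theorem zeros_bounded_of_equivalent_norm_with_bounded_multiplication
    (Nn Ns : Polynomial ℂ → ℝ)
    (hNadd : ∀ f g, Nn (f + g) ≤ Nn f + Nn g)
    (hNsmul : ∀ (z : ℂ) f, Nn (z • f) = ‖z‖ * Nn f)
    (hNpos : ∀ f, f ≠ 0 → 0 < Nn f)
    (C₁ C₂ C₃ : ℝ) (hC₁ : 0 < C₁) (hC₂ : 0 < C₂) (hC₃ : 0 < C₃)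
    (hequiv : ∀ q : Polynomial ℂ, C₁ * Ns q ≤ Nn q ∧ Nn q ≤ C₂ * Ns q)
    (hmult : ∀ q : Polynomial ℂ, Ns (X * q) ≤ C₃ * Ns q)
    (n : ℕ) (P : Polynomial ℂ) (hPm : P.Monic) (hPd : P.natDegree = n)
    (hmin : ∀ Q : Polynomial ℂ, Q.Monic → Q.natDegree = n → Nn P ≤ Nn Q)
    (z₀ : ℂ) (hz₀ : P.eval z₀ = 0) :
    ‖z₀‖ ≤ 2 * C₂ * C₃ / C₁ := by
  -- n ≥ 1
  have hn : 1 ≤ n := by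
    by_contra h
    push_neg at h
    interval_cases n
    have hc := Polynomial.eq_C_of_natDegree_eq_zero hPd
    have hl : P.coeff 0 = 1 := by
      have := hPm; rw [Polynomial.Monic, Polynomial.leadingCoeff, hPd] at this; exact this
    rw [hc] at hz₀; simp [hl] at hz₀
  -- factor P = (X - C z₀) * q
  obtain ⟨q, hq⟩ := (Polynomial.dvd_iff_isRoot.mpr hz₀)
  have hXm : (X - C z₀ : Polynomial ℂ).Monic := Polynomial.monic_X_sub_C z₀
  have hqm : q.Monic := by
    have := hPm; rw [hq] at this
    exact hXm.of_mul_monic_left this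
  have hq0 : q ≠ 0 := hqm.ne_zero
  have hdeg : q.natDegree = n - 1 := by
    have : P.natDegree = (X - C z₀).natDegree + q.natDegree :=
      hq ▸ Polynomial.natDegree_mul (hXm.ne_zero) hq0
    rw [Polynomial.natDegree_X_sub_C] at this
    omega
  have hXq : (X * q : Polynomial ℂ).Monic := (Polynomial.monic_X).mul hqm
  have hXqd : (X * q).natDegree = n := by
    rw [Polynomial.natDegree_mul Polynomial.X_ne_zero hq0,
      Polynomial.natDegree_X, hdeg]; omega
  have hPle : Nn P ≤ Nn (X * q) := hmin _ hXq hXqd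
  have hsub : z₀ • q = X * q + (-1 : ℂ) • P := by
    rw [hq]; ring_nf; simp [Polynomial.smul_eq_C_mul]; ring
  have key : ‖z₀‖ * Nn q ≤ 2 * (Nn (X * q)) := by
    rw [← hNsmul, hsub]
    calc Nn (X * q + (-1 : ℂ) • P) ≤ Nn (X * q) + Nn ((-1 : ℂ) • P) := hNadd _ _
      _ = Nn (X * q) + Nn P := by rw [hNsmul]; simp
      _ ≤ Nn (X * q) + Nn (X * q) := by linarith
      _ = 2 * Nn (X * q) := by ring
  have h1 : Nn (X * q) ≤ C₂ * (C₃ * Ns q) := by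
    calc Nn (X * q) ≤ C₂ * Ns (X * q) := (hequiv _).2
      _ ≤ C₂ * (C₃ * Ns q) := by
          have := hmult q; nlinarith
  have h2 : C₁ * Ns q ≤ Nn q := (hequiv q).1
  have hqpos : 0 < Nn q := hNpos q hq0
  have hNsq : 0 < Ns q := by nlinarith [(hequiv q).2]
  have : ‖z₀‖ * Nn q ≤ 2 * C₂ * C₃ * Ns q := by nlinarith
  have hfin : ‖z₀‖ * (C₁ * Ns q) ≤ 2 * C₂ * C₃ * Ns q := by
    have hab : 0 ≤ ‖z₀‖ := norm_nonneg _
    nlinarith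
  rw [le_div_iff₀ hC₁]
  nlinarith
end

section
/- Generalized Rolle inequality for sequentially-ordered families of intervals: let I₀,…,I_m be real intervals with I_k disjoint from the interior of the convex hull of I₀ ∪ ⋯ ∪ I_{k−1} for k = 1,…,m, and let Q be a real polynomial of degree ≥ m. Then for every closed subinterval J of the interior of I₀: N₀(Q;J) + N(Q; I₀ \ J) + Σ_{i=1}^m N(Q^{(i)}; I_i) ≤ N₀(Q^{(m)}; J) + N(Q^{(m)}; ch(∪_{i=0}^m I_i) \ J) + m, where N₀(f;A) counts zeros of f in A with multiplicity and N(f;A) counts distinct zeros of f in A. -/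
open Polynomial

open scoped Classical in
/-- `N₀(Q;A)`: number of zeros of `Q` in `A` counted with multiplicity. -/
noncomputable def nZerosMult (Q : Polynomial ℝ) (A : Set ℝ) : ℕ :=
  (Q.roots.filter (fun x => x ∈ A)).card

open scoped Classical in
/-- `N(Q;A)`: number of distinct zeros of `Q` in `A`. -/
noncomputable def nZeros (Q : Polynomial ℝ) (A : Set ℝ) : ℕ :=
  (Q.roots.toFinset.filter (fun x => x ∈ A)).card

open scoped Classical

section Aux

lemma card_filter_eq_sum_count (M : Multiset ℝ) (p : ℝ → Prop) :
    (M.filter p).card = ∑ x ∈ M.toFinset.filter p, M.count x := by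
  rw [← Multiset.toFinset_sum_count_eq (M.filter p), Multiset.toFinset_filter]
  exact Finset.sum_congr rfl fun x hx => by
    rw [Multiset.count_filter, if_pos (Finset.mem_filter.1 hx).2]

lemma sum_count_le_card (F : Finset ℝ) (M : Multiset ℝ) :
    ∑ x ∈ F, M.count x ≤ M.card := by
  have h1 : ∑ x ∈ F ∪ M.toFinset, M.count x = ∑ x ∈ M.toFinset, M.count x :=
    (Finset.sum_subset Finset.subset_union_right fun x _ hx =>
      Multiset.count_eq_zero.2 fun hm => hx (Multiset.mem_toFinset.2 hm)).symm
  calc ∑ x ∈ F, M.count x ≤ ∑ x ∈ F ∪ M.toFinset, M.count x :=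
        Finset.sum_le_sum_of_subset Finset.subset_union_left
    _ = M.card := h1.trans (Multiset.toFinset_sum_count_eq M)

lemma nZeros_mono (Q : Polynomial ℝ) {S T : Set ℝ} (h : S ⊆ T) :
    nZeros Q S ≤ nZeros Q T := by
  refine Finset.card_le_card fun x hx => ?_
  simp only [Finset.mem_filter] at hx ⊢
  exact ⟨hx.1, h hx.2⟩

lemma nZeros_add_le (Q : Polynomial ℝ) {S T : Set ℝ} (h : Disjoint S T) :
    nZeros Q S + nZeros Q T ≤ nZeros Q (S ∪ T) := by
  unfold nZeros
  rw [← Finset.card_union_of_disjoint]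
  · refine Finset.card_le_card fun x hx => ?_
    simp only [Finset.mem_union, Finset.mem_filter, Set.mem_union] at hx ⊢
    tauto
  · rw [Finset.disjoint_filter]
    intro x _ hxS hxT
    exact (h.ne_of_mem hxS hxT) rfl

/-- The localized Rolle step. -/
lemma rolle_step (Q : Polynomial ℝ) (A J : Set ℝ) (hJA : J ⊆ A) :
    nZerosMult Q J + nZeros Q (A \ J) ≤
      nZerosMult (derivative Q) J +
        nZeros (derivative Q) (interior (convexHull ℝ A) \ J) + 1 := by
  set s : Finset ℝ := Q.roots.toFinset.filter (· ∈ A) with hs_def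
  set t : Finset ℝ :=
    (derivative Q).roots.toFinset.filter (· ∈ interior (convexHull ℝ A)) with ht_def
  -- interleaving
  have hst : s.card ≤ (t \ s).card + 1 := by
    refine Finset.card_le_diff_of_interleaved fun x hx y hy hxy _ => ?_
    obtain ⟨hx1, hx2⟩ := Finset.mem_filter.1 hx
    obtain ⟨hy1, hy2⟩ := Finset.mem_filter.1 hy
    rw [Multiset.mem_toFinset, mem_roots'] at hx1 hy1
    have hder : derivative Q ≠ 0 := by
      intro h0
      obtain ⟨c, hc⟩ : ∃ c, Q = C c := ⟨Q.coeff 0, eq_C_of_derivative_eq_zero h0⟩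
      apply hx1.1
      have := hx1.2
      rw [hc, IsRoot, eval_C] at this
      rw [hc, this, map_zero]
    obtain ⟨z, hz1, hz2⟩ :=
      exists_deriv_eq_zero hxy Q.continuousOn (hx1.2.trans hy1.2.symm)
    refine ⟨z, Finset.mem_filter.2 ⟨Multiset.mem_toFinset.2 ?_, ?_⟩, hz1.1, hz1.2⟩
    · rw [mem_roots hder, IsRoot, ← Polynomial.deriv]
      exact hz2
    · -- z ∈ interior (convexHull ℝ A)
      have hIoo : Set.Ioo x y ⊆ convexHull ℝ A := by
        intro w hw
        exact (convex_convexHull ℝ A).ordConnected.out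
          (subset_convexHull ℝ A hx2) (subset_convexHull ℝ A hy2)
          ⟨le_of_lt hw.1, le_of_lt hw.2⟩
      exact interior_maximal hIoo isOpen_Ioo hz1
  set sJ : Finset ℝ := s.filter (· ∈ J) with hsJ_def
  -- LHS decomposition
  have hL1 : nZerosMult Q J = ∑ x ∈ sJ, Q.roots.count x := by
    rw [nZerosMult, card_filter_eq_sum_count]
    congr 1
    ext x
    simp only [Finset.mem_filter, hsJ_def, hs_def]
    exact ⟨fun ⟨h1, h2⟩ => ⟨⟨h1, hJA h2⟩, h2⟩, fun ⟨⟨h1, _⟩, h2⟩ => ⟨h1, h2⟩⟩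
  have hL2 : nZeros Q (A \ J) = (s.filter (· ∉ J)).card := by
    rw [nZeros]
    congr 1
    ext x
    simp only [Finset.mem_filter, hs_def, Set.mem_diff]
    tauto
  have hL3 : ∑ x ∈ sJ, Q.roots.count x
      = (∑ x ∈ sJ, (Q.roots.count x - 1)) + sJ.card := by
    rw [Finset.card_eq_sum_ones, ← Finset.sum_add_distrib]
    refine Finset.sum_congr rfl fun x hx => ?_
    have hx' : x ∈ Q.roots.toFinset :=
      (Finset.mem_filter.1 ((Finset.mem_filter.1 hx).1)).1
    have : 1 ≤ Q.roots.count x :=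
      Multiset.count_pos.2 (Multiset.mem_toFinset.1 hx')
    omega
  have hscard : s.card = sJ.card + (s.filter (· ∉ J)).card :=
    (Finset.card_filter_add_card_filter_not (p := (· ∈ J))).symm
  -- RHS bound for nZerosMult (derivative Q) J
  have hR1 : (∑ x ∈ sJ, (Q.roots.count x - 1)) + ((t \ s).filter (· ∈ J)).card
      ≤ nZerosMult (derivative Q) J := by
    have hdisj : Disjoint sJ ((t \ s).filter (· ∈ J)) := by
      refine Finset.disjoint_left.2 fun x hx hx' => ?_
      exact (Finset.mem_sdiff.1 (Finset.mem_filter.1 hx').1).2 (Finset.mem_filter.1 hx).1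
    have key : ∑ x ∈ sJ ∪ (t \ s).filter (· ∈ J),
        ((derivative Q).roots.filter (fun y => y ∈ J)).count x
        ≤ nZerosMult (derivative Q) J :=
      sum_count_le_card _ _
    rw [Finset.sum_union hdisj] at key
    refine le_trans (add_le_add ?_ ?_) key
    · refine Finset.sum_le_sum fun x hx => ?_
      have hxJ : x ∈ J := (Finset.mem_filter.1 hx).2
      rw [Multiset.count_filter, if_pos hxJ, count_roots, count_roots]
      exact rootMultiplicity_sub_one_le_derivative_rootMultiplicity Q x
    · rw [Finset.card_eq_sum_ones]
      refine Finset.sum_le_sum fun x hx => ?_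
      obtain ⟨hxts, hxJ⟩ := Finset.mem_filter.1 hx
      have hxt := (Finset.mem_sdiff.1 hxts).1
      have : x ∈ (derivative Q).roots :=
        Multiset.mem_toFinset.1 (Finset.mem_filter.1 hxt).1
      rw [Multiset.count_filter, if_pos hxJ]
      exact Multiset.count_pos.2 this
  -- RHS bound for the distinct zeros part
  have hR2 : ((t \ s).filter (· ∉ J)).card
      ≤ nZeros (derivative Q) (interior (convexHull ℝ A) \ J) := by
    refine Finset.card_le_card fun x hx => ?_
    simp only [ht_def, hs_def, Finset.mem_filter, Finset.mem_sdiff, Set.mem_diff] at hx ⊢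
    tauto
  have hsplit : (t \ s).card
      = ((t \ s).filter (· ∈ J)).card + ((t \ s).filter (· ∉ J)).card :=
    (Finset.card_filter_add_card_filter_not (p := (· ∈ J))).symm
  calc nZerosMult Q J + nZeros Q (A \ J)
      = (∑ x ∈ sJ, (Q.roots.count x - 1)) + s.card := by
        rw [hL1, hL2, hL3, hscard]; ring
    _ ≤ (∑ x ∈ sJ, (Q.roots.count x - 1)) + ((t \ s).card + 1) := by
        exact Nat.add_le_add_left hst _
    _ = ((∑ x ∈ sJ, (Q.roots.count x - 1)) + ((t \ s).filter (· ∈ J)).card)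
          + ((t \ s).filter (· ∉ J)).card + 1 := by rw [hsplit]; ring
    _ ≤ nZerosMult (derivative Q) J
          + nZeros (derivative Q) (interior (convexHull ℝ A) \ J) + 1 := by
        exact Nat.add_le_add_right (Nat.add_le_add hR1 hR2) 1

/-- The accumulated interval at stage `k`. -/
def accSet (I : ℕ → Set ℝ) : ℕ → Set ℝ
  | 0 => I 0
  | (k + 1) => interior (convexHull ℝ (⋃ i < k + 1, I i)) ∪ I (k + 1)

lemma accSet_subset (I : ℕ → Set ℝ) (k : ℕ) :
    accSet I k ⊆ convexHull ℝ (⋃ i < k + 1, I i) := by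
  have hIk : ∀ j, j < k + 1 → I j ⊆ convexHull ℝ (⋃ i < k + 1, I i) :=
    fun j hj x hx => subset_convexHull ℝ _ (Set.mem_biUnion hj hx)
  cases k with
  | zero => exact hIk 0 (by norm_num)
  | succ n =>
    apply Set.union_subset
    · refine interior_subset.trans ?_
      refine convexHull_mono fun x hx => ?_
      obtain ⟨j, hj, hxj⟩ := Set.mem_iUnion₂.1 hx
      exact Set.mem_iUnion₂.2 ⟨j, Nat.lt_succ_of_lt hj, hxj⟩
    · exact hIk (n + 1) (Nat.lt_succ_self _)

lemma aux_induction (I : ℕ → Set ℝ) (J : Set ℝ) (Q : Polynomial ℝ)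
    (hJ : J ⊆ interior (I 0)) (m : ℕ)
    (horder : ∀ k, 1 ≤ k → k ≤ m →
      I k ∩ interior (convexHull ℝ (⋃ i < k, I i)) = ∅) :
    ∀ k, k ≤ m →
      nZerosMult Q J + nZeros Q (I 0 \ J) +
        ∑ i ∈ Finset.Icc 1 k, nZeros (derivative^[i] Q) (I i) ≤
      nZerosMult (derivative^[k] Q) J +
        nZeros (derivative^[k] Q) (accSet I k \ J) + k := by
  intro k
  induction k with
  | zero => intro _; simp [accSet]
  | succ k ih =>
    intro hkm
    have hk : k ≤ m := Nat.le_of_succ_le hkm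
    set A : Set ℝ := convexHull ℝ (⋃ i < k + 1, I i) with hA_def
    have hI0A : I 0 ⊆ A :=
      fun x hx => subset_convexHull ℝ _ (Set.mem_biUnion (Nat.succ_pos k) hx)
    have hJA : J ⊆ A := fun x hx => hI0A (interior_subset (hJ hx))
    have hJintA : J ⊆ interior A := hJ.trans (interior_mono hI0A)
    have hdisj : I (k + 1) ∩ interior A = ∅ :=
      horder (k + 1) (Nat.succ_le_succ (Nat.zero_le _)) hkm
    have hJIk : Disjoint (interior A \ J) (I (k + 1)) := by
      rw [Set.disjoint_left]
      intro x hx hx'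
      have : x ∈ I (k + 1) ∩ interior A := ⟨hx', hx.1⟩
      rw [hdisj] at this
      exact this
    have hJIk2 : Disjoint J (I (k + 1)) := by
      rw [Set.disjoint_left]
      intro x hx hx'
      have : x ∈ I (k + 1) ∩ interior A := ⟨hx', hJintA hx⟩
      rw [hdisj] at this
      exact this
    have hunion : (interior A \ J) ∪ I (k + 1) = accSet I (k + 1) \ J := by
      show _ = (interior A ∪ I (k + 1)) \ J
      ext x
      simp only [Set.mem_union, Set.mem_diff]
      constructor
      · rintro (⟨h1, h2⟩ | h)
        · exact ⟨Or.inl h1, h2⟩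
        · exact ⟨Or.inr h, Set.disjoint_right.1 hJIk2 h⟩
      · rintro ⟨h | h, h2⟩
        · exact Or.inl ⟨h, h2⟩
        · exact Or.inr h
    have step := rolle_step (derivative^[k] Q) A J hJA
    rw [(convex_convexHull ℝ _).convexHull_eq] at step
    have hmono : nZeros (derivative^[k] Q) (accSet I k \ J)
        ≤ nZeros (derivative^[k] Q) (A \ J) :=
      nZeros_mono _ (Set.diff_subset_diff_left (accSet_subset I k))
    have hadd : nZeros (derivative (derivative^[k] Q)) (interior A \ J)
          + nZeros (derivative (derivative^[k] Q)) (I (k + 1))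
        ≤ nZeros (derivative (derivative^[k] Q)) (accSet I (k + 1) \ J) := by
      rw [← hunion]
      exact nZeros_add_le _ hJIk
    have hsum : ∑ i ∈ Finset.Icc 1 (k + 1), nZeros (derivative^[i] Q) (I i)
        = (∑ i ∈ Finset.Icc 1 k, nZeros (derivative^[i] Q) (I i))
          + nZeros (derivative^[k + 1] Q) (I (k + 1)) :=
      Finset.sum_Icc_succ_top (a := 1) (Nat.succ_le_succ (Nat.zero_le k)) _
    have hit : derivative^[k + 1] Q = derivative (derivative^[k] Q) :=
      Function.iterate_succ_apply' _ _ _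
    rw [hsum, hit, ← Nat.add_assoc]
    calc nZerosMult Q J + nZeros Q (I 0 \ J) +
          (∑ i ∈ Finset.Icc 1 k, nZeros (derivative^[i] Q) (I i))
          + nZeros (derivative (derivative^[k] Q)) (I (k + 1))
        ≤ (nZerosMult (derivative^[k] Q) J
            + nZeros (derivative^[k] Q) (accSet I k \ J) + k)
          + nZeros (derivative (derivative^[k] Q)) (I (k + 1)) :=
          Nat.add_le_add_right (ih hk) _
      _ ≤ (nZerosMult (derivative^[k] Q) J
            + nZeros (derivative^[k] Q) (A \ J) + k)
          + nZeros (derivative (derivative^[k] Q)) (I (k + 1)) := by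
          exact Nat.add_le_add_right (Nat.add_le_add_right (Nat.add_le_add_left hmono _) _) _
      _ ≤ (nZerosMult (derivative (derivative^[k] Q)) J
            + nZeros (derivative (derivative^[k] Q)) (interior A \ J) + 1 + k)
          + nZeros (derivative (derivative^[k] Q)) (I (k + 1)) := by
          exact Nat.add_le_add_right (Nat.add_le_add_right step _) _
      _ ≤ nZerosMult (derivative (derivative^[k] Q)) J
            + nZeros (derivative (derivative^[k] Q)) (accSet I (k + 1) \ J) + (k + 1) := by
          have := Nat.add_le_add_left hadd
            (nZerosMult (derivative (derivative^[k] Q)) J)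
          omega

end Aux

/-- Generalized Rolle inequality for sequentially-ordered families of intervals. -/
theorem generalized_rolle_inequality
    (m : ℕ) (I : ℕ → Set ℝ) (hI : ∀ k ≤ m, (I k).OrdConnected)
    (horder : ∀ k, 1 ≤ k → k ≤ m →
      I k ∩ interior (convexHull ℝ (⋃ i < k, I i)) = ∅)
    (Q : Polynomial ℝ) (hQ : Q ≠ 0) (hdeg : m ≤ Q.natDegree)
    (J : Set ℝ) (hJc : IsClosed J) (hJi : J.OrdConnected)
    (hJ : J ⊆ interior (I 0)) :
    nZerosMult Q J + nZeros Q (I 0 \ J) +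
      ∑ i ∈ Finset.Icc 1 m, nZeros (derivative^[i] Q) (I i) ≤
    nZerosMult (derivative^[m] Q) J +
      nZeros (derivative^[m] Q)
        (convexHull ℝ (⋃ i ∈ Finset.range (m + 1), I i) \ J) + m := by
  have hmain := aux_induction I J Q hJ m horder m le_rfl
  have hsets : (⋃ i ∈ Finset.range (m + 1), I i) = ⋃ i < m + 1, I i := by
    ext x; simp [Finset.mem_range]
  have hfin : nZeros (derivative^[m] Q) (accSet I m \ J)
      ≤ nZeros (derivative^[m] Q)
        (convexHull ℝ (⋃ i ∈ Finset.range (m + 1), I i) \ J) := by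
    rw [hsets]
    exact nZeros_mono _ (Set.diff_subset_diff_left (accSet_subset I m))
  omega
end

section
/- Corollary of the generalized Rolle inequality: under the same sequential-ordering hypothesis on intervals I₀,…,I_m, for any real polynomial Q, Σ_{i=0}^m N(Q^{(i)}; I_i) ≤ deg Q, where N(f;A) is the number of distinct zeros of f in A. -/
open Polynomial

section Aux

open Set
open scoped Classical

/-- Roots of `P` lying in `S`, with multiplicity. -/
noncomputable def rootsIn (P : Polynomial ℝ) (S : Set ℝ) : Multiset ℝ :=
  P.roots.filter (fun x => x ∈ S)

/-- Distinct roots of `P` lying in `S`. -/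
noncomputable def rootsF (P : Polynomial ℝ) (S : Set ℝ) : Finset ℝ :=
  P.roots.toFinset.filter (fun x => x ∈ S)

/-- The reduced zero count: roots in the interior with multiplicity, plus roots of `S`
outside the interior counted once each. -/
noncomputable def zcount (P : Polynomial ℝ) (S : Set ℝ) : ℕ :=
  (rootsIn P (interior S)).card + (rootsF P (S \ interior S)).card

lemma mem_rootsF {P : Polynomial ℝ} {A : Set ℝ} {x : ℝ} :
    x ∈ rootsF P A ↔ x ∈ P.roots ∧ x ∈ A := by
  rw [rootsF, Finset.mem_filter, Multiset.mem_toFinset]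

lemma mem_rootsIn {P : Polynomial ℝ} {A : Set ℝ} {x : ℝ} :
    x ∈ rootsIn P A ↔ x ∈ P.roots ∧ x ∈ A := by
  rw [rootsIn, Multiset.mem_filter]

lemma count_rootsIn (P : Polynomial ℝ) (A : Set ℝ) (x : ℝ) :
    (rootsIn P A).count x = if x ∈ A then rootMultiplicity x P else 0 := by
  rw [rootsIn, Multiset.count_filter, count_roots]

lemma rootsIn_card_le_roots (P : Polynomial ℝ) (A : Set ℝ) :
    (rootsIn P A).card ≤ Multiset.card P.roots := by
  refine Multiset.card_le_card ?_
  rw [rootsIn]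
  exact Multiset.filter_le _ _

lemma nZeros_eq_rootsF (P : Polynomial ℝ) (A : Set ℝ) : nZeros P A = (rootsF P A).card := by
  rw [nZeros, rootsF]

lemma rootsF_eq_toFinset (P : Polynomial ℝ) (A : Set ℝ) :
    rootsF P A = (rootsIn P A).toFinset := by
  simp [rootsF, rootsIn, Multiset.toFinset_filter]

lemma rootsF_card_le (P : Polynomial ℝ) (A : Set ℝ) :
    (rootsF P A).card ≤ (rootsIn P A).card := by
  rw [rootsF_eq_toFinset]; exact Multiset.toFinset_card_le _

lemma rootsIn_mono (P : Polynomial ℝ) {A B : Set ℝ} (h : A ⊆ B) :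
    rootsIn P A ≤ rootsIn P B :=
  Multiset.monotone_filter_right _ (fun x hx => h hx)

lemma rootsF_mono (P : Polynomial ℝ) {A B : Set ℝ} (h : A ⊆ B) :
    rootsF P A ⊆ rootsF P B :=
  Finset.monotone_filter_right _ (fun x _ hx => h hx)

lemma rootsIn_card_add_le (P : Polynomial ℝ) {A B C : Set ℝ} (hA : A ⊆ C) (hB : B ⊆ C)
    (hAB : ∀ x, x ∈ A → x ∉ B) :
    (rootsIn P A).card + (rootsIn P B).card ≤ (rootsIn P C).card := by
  rw [rootsIn, rootsIn, rootsIn, ← Multiset.card_add]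
  refine Multiset.card_le_card ?_
  rw [Multiset.le_iff_count]
  intro x
  rw [Multiset.count_add, Multiset.count_filter, Multiset.count_filter, Multiset.count_filter]
  by_cases h1 : x ∈ A
  · have h2 : x ∉ B := hAB x h1
    simp only [if_pos h1, if_neg h2, if_pos (hA h1), add_zero, le_refl]
  · by_cases h2 : x ∈ B
    · simp only [if_neg h1, if_pos h2, if_pos (hB h2), zero_add, le_refl]
    · simp only [if_neg h1, if_neg h2, add_zero]
      split_ifs <;> omega

lemma rootsIn_card_eq_sum (P : Polynomial ℝ) (A : Set ℝ) :
    (rootsIn P A).card = ∑ x ∈ rootsF P A, rootMultiplicity x P := by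
  rw [rootsF_eq_toFinset, ← Multiset.toFinset_sum_count_eq (rootsIn P A)]
  refine Finset.sum_congr rfl fun x hx => ?_
  rw [Multiset.mem_toFinset, mem_rootsIn] at hx
  rw [rootsIn, Multiset.count_filter, if_pos hx.2, count_roots]

lemma zcount_le_natDegree (P : Polynomial ℝ) (S : Set ℝ) :
    zcount P S ≤ P.natDegree := by
  have h1 : (rootsIn P (interior S)).card + (rootsIn P (S \ interior S)).card
      ≤ (rootsIn P Set.univ).card := by
    refine rootsIn_card_add_le P (subset_univ _) (subset_univ _) ?_
    intro x hx hx'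
    exact hx'.2 hx
  have h2 : (rootsIn P Set.univ).card ≤ P.natDegree :=
    le_trans (rootsIn_card_le_roots P Set.univ) (Polynomial.card_roots' P)
  have h3 : (rootsF P (S \ interior S)).card ≤ (rootsIn P (S \ interior S)).card :=
    rootsF_card_le _ _
  rw [zcount]
  omega

lemma nZeros_le_zcount (P : Polynomial ℝ) {A S : Set ℝ} (hAS : A ⊆ S) :
    nZeros P A ≤ zcount P S := by
  rw [nZeros_eq_rootsF, zcount]
  have h1 : rootsF P A ⊆ rootsF P (interior S) ∪ rootsF P (S \ interior S) := by
    intro x hx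
    rw [mem_rootsF] at hx
    rcases Classical.em (x ∈ interior S) with h | h
    · exact Finset.mem_union_left _ (mem_rootsF.2 ⟨hx.1, h⟩)
    · exact Finset.mem_union_right _ (mem_rootsF.2 ⟨hx.1, hAS hx.2, h⟩)
  calc (rootsF P A).card ≤ (rootsF P (interior S) ∪ rootsF P (S \ interior S)).card :=
        Finset.card_le_card h1
    _ ≤ (rootsF P (interior S)).card + (rootsF P (S \ interior S)).card :=
        Finset.card_union_le _ _
    _ ≤ (rootsIn P (interior S)).card + (rootsF P (S \ interior S)).card := by
        have := rootsF_card_le P (interior S); omega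

/-- A root of `P` interior to `S` contributes its multiplicity minus one
to the roots of `P'` at the same spot. -/
lemma point_bound (P : Polynomial ℝ) (hP : P ≠ 0) {S : Set ℝ} {b : ℝ}
    (hbroot : P.IsRoot b) :
    (if b ∈ interior S then rootMultiplicity b P else 1)
      ≤ (rootsIn (derivative P) (interior S ∩ {b})).card + 1 := by
  split_ifs with hbi
  · have h1 : rootMultiplicity b (derivative P) = rootMultiplicity b P - 1 :=
      derivative_rootMultiplicity_of_root hbroot
    have h2 : Multiset.count b (rootsIn (derivative P) (interior S ∩ {b}))
        = rootMultiplicity b P - 1 := by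
      rw [count_rootsIn]
      split_ifs with h
      · rw [h1]
      · exact absurd ⟨hbi, rfl⟩ h
    have h3 := Multiset.count_le_card b (rootsIn (derivative P) (interior S ∩ {b}))
    have h4 : 1 ≤ rootMultiplicity b P := (rootMultiplicity_pos hP).2 hbroot
    omega
  · omega

lemma rolle_aux (P : Polynomial ℝ) (hP : P ≠ 0) (S : Set ℝ) (hS : S.OrdConnected) :
    ∀ (N : ℕ) (R : Finset ℝ), R.card ≤ N → ∀ (hR : R.Nonempty),
      (∀ x ∈ R, x ∈ S ∧ P.IsRoot x) →
      ∑ x ∈ R, (if x ∈ interior S then rootMultiplicity x P else 1)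
        ≤ (rootsIn (derivative P) (interior S ∩ Set.Iic (R.max' hR))).card + 1 := by
  intro N
  induction N with
  | zero =>
    intro R hcard hR _
    exact absurd (Finset.card_pos.2 hR) (by omega)
  | succ N ihN =>
    intro R hcard hR hyp
    set b := R.max' hR with hbdef
    have hbmem : b ∈ R := R.max'_mem hR
    obtain ⟨hbS, hbroot⟩ := hyp b hbmem
    have hpoint := point_bound P hP (S := S) hbroot
    rcases (R.erase b).eq_empty_or_nonempty with he | hne
    · -- R = {b}
      have hRb : R = {b} := by
        rcases (Finset.erase_eq_empty_iff _ _).1 he with h | h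
        · exact absurd h (Finset.nonempty_iff_ne_empty.1 hR)
        · exact h
      rw [hRb, Finset.sum_singleton]
      have hmono : (rootsIn (derivative P) (interior S ∩ {b})).card
          ≤ (rootsIn (derivative P) (interior S ∩ Set.Iic b)).card := by
        refine Multiset.card_le_card (rootsIn_mono _ ?_)
        rintro x ⟨hx1, hx2⟩
        rw [Set.mem_singleton_iff] at hx2
        subst hx2
        exact ⟨hx1, Set.mem_Iic.2 (le_refl _)⟩
      omega
    · -- R has at least two elements
      set R' := R.erase b with hR'def
      set a := R'.max' hne with hadef
      have hamem' : a ∈ R' := R'.max'_mem hne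
      have hamem : a ∈ R := Finset.mem_of_mem_erase hamem'
      have hab : a < b := by
        have h1 : a ≤ b := R.le_max' a hamem
        have h2 : a ≠ b := (Finset.mem_erase.1 hamem').1
        exact lt_of_le_of_ne h1 h2
      obtain ⟨haS, haroot⟩ := hyp a hamem
      have hcard' : R'.card ≤ N := by
        have he1 : R'.card = R.card - 1 := by
          rw [hR'def]; exact Finset.card_erase_of_mem hbmem
        have he2 := Finset.card_pos.2 hR
        omega
      have hIH := ihN R' hcard' hne (fun x hx => hyp x (Finset.mem_of_mem_erase hx))
      rw [← hadef] at hIH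
      -- Rolle point in (a,b)
      have hP' : derivative P ≠ 0 := by
        intro h
        have h0 : P.natDegree = 0 := natDegree_eq_zero_of_derivative_eq_zero h
        have hC := Polynomial.eq_C_of_natDegree_eq_zero h0
        rw [hC] at hbroot
        simp [IsRoot] at hbroot
        rw [hC, hbroot] at hP
        simp at hP
      have hrolle : 1 ≤ (rootsIn (derivative P) (interior S ∩ Set.Ioo a b)).card := by
        obtain ⟨y, hy, hy0⟩ := exists_deriv_eq_zero hab (P.continuous.continuousOn)
          (by rw [haroot.eq_zero, hbroot.eq_zero])
        have hyroot : y ∈ (derivative P).roots := by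
          rw [mem_roots hP']
          rwa [IsRoot, ← Polynomial.deriv]
        have hyint : y ∈ interior S := by
          have hIoo : Set.Ioo a b ⊆ S := fun z hz => hS.out haS hbS ⟨hz.1.le, hz.2.le⟩
          exact interior_maximal hIoo isOpen_Ioo hy
        have hmem : y ∈ rootsIn (derivative P) (interior S ∩ Set.Ioo a b) :=
          mem_rootsIn.2 ⟨hyroot, hyint, hy⟩
        rw [Nat.one_le_iff_ne_zero, ← Nat.pos_iff_ne_zero, Multiset.card_pos_iff_exists_mem]
        exact ⟨y, hmem⟩
      -- combine the three disjoint regions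
      have hcomb1 : (rootsIn (derivative P) (interior S ∩ Set.Iic a)).card
          + (rootsIn (derivative P) (interior S ∩ Set.Ioo a b)).card
          ≤ (rootsIn (derivative P) (interior S ∩ Set.Iio b)).card := by
        refine rootsIn_card_add_le _ ?_ ?_ ?_
        · rintro x ⟨h1, h2⟩
          exact ⟨h1, Set.mem_Iio.2 (lt_of_le_of_lt (Set.mem_Iic.1 h2) hab)⟩
        · rintro x ⟨h1, h2⟩
          exact ⟨h1, Set.mem_Iio.2 h2.2⟩
        · rintro x ⟨h1, h2⟩ ⟨h3, h4⟩
          exact absurd (Set.mem_Iic.1 h2) (not_le.2 h4.1)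
      have hcomb2 : (rootsIn (derivative P) (interior S ∩ Set.Iio b)).card
          + (rootsIn (derivative P) (interior S ∩ {b})).card
          ≤ (rootsIn (derivative P) (interior S ∩ Set.Iic b)).card := by
        refine rootsIn_card_add_le _ ?_ ?_ ?_
        · rintro x ⟨h1, h2⟩
          exact ⟨h1, Set.mem_Iic.2 (Set.mem_Iio.1 h2).le⟩
        · rintro x ⟨h1, h2⟩
          rw [Set.mem_singleton_iff] at h2; subst h2
          exact ⟨h1, Set.mem_Iic.2 (le_refl _)⟩
        · rintro x ⟨h1, h2⟩ ⟨h3, h4⟩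
          rw [Set.mem_singleton_iff] at h4; subst h4
          exact absurd (Set.mem_Iio.1 h2) (lt_irrefl _)
      have hsum : ∑ x ∈ R, (if x ∈ interior S then rootMultiplicity x P else 1)
          = (∑ x ∈ R', (if x ∈ interior S then rootMultiplicity x P else 1))
            + (if b ∈ interior S then rootMultiplicity b P else 1) := by
        rw [hR'def, Finset.sum_erase_add R _ hbmem]
      rw [hsum]
      omega

/-- The generalised Rolle step. -/
lemma rolle_step_s15 (P : Polynomial ℝ) (hP : P ≠ 0) (S : Set ℝ) (hS : S.OrdConnected) :
    zcount P S ≤ (rootsIn (derivative P) (interior S)).card + 1 := by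
  rcases (rootsF P S).eq_empty_or_nonempty with he | hne
  · have h1 : rootsIn P (interior S) = 0 := by
      rw [rootsIn, Multiset.filter_eq_nil]
      intro x hx hxi
      have hmem : x ∈ rootsF P S := mem_rootsF.2 ⟨hx, interior_subset hxi⟩
      rw [he] at hmem
      exact absurd hmem (Finset.notMem_empty x)
    have h2 : rootsF P (S \ interior S) = ∅ := by
      rw [Finset.eq_empty_iff_forall_notMem]
      intro x hx
      rw [mem_rootsF] at hx
      have hmem : x ∈ rootsF P S := mem_rootsF.2 ⟨hx.1, hx.2.1⟩
      rw [he] at hmem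
      exact absurd hmem (Finset.notMem_empty x)
    rw [zcount, h1, h2]
    simp
  · -- rewrite zcount as a sum over the distinct roots in S
    have hsplit1 : rootsF P (interior S)
        = (rootsF P S).filter (fun x => x ∈ interior S) := by
      ext x
      rw [Finset.mem_filter, mem_rootsF, mem_rootsF]
      constructor
      · rintro ⟨h1, h2⟩; exact ⟨⟨h1, interior_subset h2⟩, h2⟩
      · rintro ⟨⟨h1, _⟩, h2⟩; exact ⟨h1, h2⟩
    have hsplit2 : rootsF P (S \ interior S)
        = (rootsF P S).filter (fun x => x ∉ interior S) := by
      ext x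
      rw [Finset.mem_filter, mem_rootsF, mem_rootsF]
      constructor
      · rintro ⟨h1, h2, h3⟩; exact ⟨⟨h1, h2⟩, h3⟩
      · rintro ⟨⟨h1, h2⟩, h3⟩; exact ⟨h1, h2, h3⟩
    have key : zcount P S = ∑ x ∈ rootsF P S,
        (if x ∈ interior S then rootMultiplicity x P else 1) := by
      rw [Finset.sum_ite, Finset.sum_const, smul_eq_mul, mul_one, zcount,
        rootsIn_card_eq_sum, hsplit1, hsplit2]
    rw [key]
    have hyp : ∀ x ∈ rootsF P S, x ∈ S ∧ P.IsRoot x := by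
      intro x hx
      rw [mem_rootsF] at hx
      have := (mem_roots hP).1 hx.1
      exact ⟨hx.2, this⟩
    calc ∑ x ∈ rootsF P S, (if x ∈ interior S then rootMultiplicity x P else 1)
        ≤ (rootsIn (derivative P) (interior S ∩ Set.Iic ((rootsF P S).max' hne))).card + 1 :=
          rolle_aux P hP S hS (rootsF P S).card _ (le_refl _) hne hyp
      _ ≤ (rootsIn (derivative P) (interior S)).card + 1 := by
          have := Multiset.card_le_card
            (rootsIn_mono (derivative P)
              (Set.inter_subset_left :
                interior S ∩ Set.Iic ((rootsF P S).max' hne) ⊆ interior S))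
          omega

lemma iter_deriv_ne_zero (Q : Polynomial ℝ) (hQ : Q ≠ 0) {k : ℕ} (hk : k ≤ Q.natDegree) :
    derivative^[k] Q ≠ 0 := by
  suffices h : derivative^[k] Q ≠ 0 ∧ Q.natDegree - k ≤ (derivative^[k] Q).natDegree from h.1
  induction k with
  | zero => simpa using hQ
  | succ k ih =>
    obtain ⟨h1, h2⟩ := ih (Nat.le_of_succ_le hk)
    have hpos : 0 < (derivative^[k] Q).natDegree := by omega
    have hd := Polynomial.degree_derivative_eq _ hpos
    rw [Function.iterate_succ_apply']
    have hnd := Polynomial.natDegree_eq_of_degree_eq_some hd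
    constructor
    · intro h; rw [h] at hd; simp at hd
    · omega

lemma nZeros_split (P : Polynomial ℝ) (A B : Set ℝ) :
    nZeros P A = (rootsF P (A ∩ B)).card + (rootsF P (A \ B)).card := by
  rw [nZeros_eq_rootsF]
  have hdisj : Disjoint (rootsF P (A ∩ B)) (rootsF P (A \ B)) := by
    rw [Finset.disjoint_left]
    intro x hx hx'
    rw [mem_rootsF] at hx hx'
    exact hx'.2.2 hx.2.2
  have hunion : rootsF P (A ∩ B) ∪ rootsF P (A \ B) = rootsF P A := by
    ext x
    rw [Finset.mem_union, mem_rootsF, mem_rootsF, mem_rootsF]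
    constructor
    · rintro (⟨h1, h2, _⟩ | ⟨h1, h2, _⟩) <;> exact ⟨h1, h2⟩
    · rintro ⟨h1, h2⟩
      rcases Classical.em (x ∈ B) with h | h
      · exact Or.inl ⟨h1, h2, h⟩
      · exact Or.inr ⟨h1, h2, h⟩
  rw [← hunion, Finset.card_union_of_disjoint hdisj]

lemma main_claim (I : ℕ → Set ℝ) (Q : Polynomial ℝ) (hQ : Q ≠ 0) :
    ∀ k, (∀ j, 1 ≤ j → j ≤ k → I j ∩ interior (convexHull ℝ (⋃ i < j, I i)) = ∅) →
    k ≤ Q.natDegree →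
    ∑ i ∈ Finset.range (k + 1), nZeros (derivative^[i] Q) (I i)
      ≤ zcount (derivative^[k] Q) (convexHull ℝ (⋃ i < k + 1, I i)) + k := by
  intro k
  induction k with
  | zero =>
    intro _ _
    rw [Finset.sum_range_one, Function.iterate_zero_apply]
    have hsub : I 0 ⊆ convexHull ℝ (⋃ i < 1, I i) := by
      refine subset_trans ?_ (subset_convexHull ℝ _)
      intro x hx
      exact Set.mem_biUnion (show (0 : ℕ) < 1 from Nat.zero_lt_one) hx
    simpa using nZeros_le_zcount Q hsub
  | succ k ih =>
    intro horder hk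
    set P : Polynomial ℝ := derivative^[k] Q with hPdef
    set P' : Polynomial ℝ := derivative^[k + 1] Q with hP'def
    have hPP' : P' = derivative P := by rw [hP'def, hPdef, Function.iterate_succ_apply']
    set Jk : Set ℝ := convexHull ℝ (⋃ i < k + 1, I i) with hJkdef
    set Jk1 : Set ℝ := convexHull ℝ (⋃ i < k + 2, I i) with hJk1def
    have hPne : P ≠ 0 := iter_deriv_ne_zero Q hQ (Nat.le_of_succ_le hk)
    have hJkOrd : Jk.OrdConnected := (convex_convexHull ℝ _).ordConnected
    have hJsub : Jk ⊆ Jk1 := by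
      refine convexHull_mono ?_
      intro x hx
      rw [Set.mem_iUnion₂] at hx ⊢
      obtain ⟨i, hi, hxi⟩ := hx
      exact ⟨i, by omega, hxi⟩
    have hintsub : interior Jk ⊆ interior Jk1 := interior_mono hJsub
    have hA : I (k + 1) ⊆ Jk1 := by
      refine subset_trans ?_ (subset_convexHull ℝ _)
      intro x hx
      exact Set.mem_biUnion (show k + 1 < k + 2 by omega) hx
    have hdisj : ∀ x, x ∈ I (k + 1) → x ∉ interior Jk := by
      intro x hx hx'
      have hmem : x ∈ I (k + 1) ∩ interior (convexHull ℝ (⋃ i < k + 1, I i)) := ⟨hx, hx'⟩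
      rw [horder (k + 1) (by omega) (le_refl _)] at hmem
      exact hmem
    have hsplit := nZeros_split P' (I (k + 1)) (interior Jk1)
    -- bound the interior multiset part of zcount P' Jk1
    have hmain : (rootsIn P' (interior Jk)).card
          + (rootsF P' (I (k + 1) ∩ interior Jk1)).card
        ≤ (rootsIn P' (interior Jk1)).card := by
      have hle := rootsF_card_le P' (I (k + 1) ∩ interior Jk1)
      have h2 : (rootsIn P' (interior Jk)).card
            + (rootsIn P' (I (k + 1) ∩ interior Jk1)).card
          ≤ (rootsIn P' (interior Jk1)).card := by
        refine rootsIn_card_add_le _ hintsub ?_ ?_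
        · rintro x ⟨_, h⟩; exact h
        · rintro x hx ⟨h1, _⟩
          exact hdisj x h1 hx
      omega
    have hbdry : (rootsF P' (I (k + 1) \ interior Jk1)).card
        ≤ (rootsF P' (Jk1 \ interior Jk1)).card := by
      refine Finset.card_le_card (rootsF_mono _ ?_)
      rintro x ⟨h1, h2⟩
      exact ⟨hA h1, h2⟩
    have hzc : (rootsIn P' (interior Jk)).card + nZeros P' (I (k + 1)) ≤ zcount P' Jk1 := by
      rw [hsplit, zcount]
      omega
    have hrolle : zcount P Jk ≤ (rootsIn P' (interior Jk)).card + 1 := by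
      rw [hPP']
      exact rolle_step_s15 P hPne Jk hJkOrd
    have hIH := ih (fun j h1 h2 => horder j h1 (by omega)) (Nat.le_of_succ_le hk)
    rw [Finset.sum_range_succ, ← hP'def]
    have hIH' : (∑ i ∈ Finset.range (k + 1), nZeros (derivative^[i] Q) (I i))
        ≤ zcount P Jk + k := hIH
    omega

end Aux

/-- Corollary of the generalized Rolle inequality: for sequentially-ordered
intervals `I₀,…,I_m`, the total number of distinct zeros of the successive
derivatives of `Q` in the corresponding intervals is at most `deg Q`. -/
theorem sum_zeros_derivatives_le_degree
    (m : ℕ) (I : ℕ → Set ℝ) (hI : ∀ k ≤ m, (I k).OrdConnected)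
    (horder : ∀ k, 1 ≤ k → k ≤ m →
      I k ∩ interior (convexHull ℝ (⋃ i < k, I i)) = ∅)
    (Q : Polynomial ℝ) (hQ : Q ≠ 0) :
    ∑ i ∈ Finset.range (m + 1), nZeros (derivative^[i] Q) (I i) ≤ Q.natDegree := by
  classical
  set n := Q.natDegree with hn
  set t := min m n with ht
  have htm : t ≤ m := min_le_left _ _
  have htn : t ≤ n := min_le_right _ _
  -- terms beyond `n` vanish
  have hsum : ∑ i ∈ Finset.range (m + 1), nZeros (derivative^[i] Q) (I i)
      = ∑ i ∈ Finset.range (t + 1), nZeros (derivative^[i] Q) (I i) := by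
    symm
    refine Finset.sum_subset ?_ ?_
    · intro x hx
      rw [Finset.mem_range] at hx ⊢
      omega
    · intro x hx hnx
      rw [Finset.mem_range] at hx hnx
      have hxn : n < x := by
        by_contra h
        push_neg at h
        omega
      have hzero : derivative^[x] Q = 0 := Polynomial.iterate_derivative_eq_zero hxn
      rw [hzero]
      simp [nZeros]
  rw [hsum]
  have hclaim := main_claim I Q hQ t (fun j h1 h2 => horder j h1 (by omega)) htn
  have hzc : zcount (derivative^[t] Q) (convexHull ℝ (⋃ i < t + 1, I i)) ≤ n - t := by
    refine le_trans (zcount_le_natDegree _ _) ?_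
    exact Polynomial.natDegree_iterate_derivative Q t
  omega
end
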